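/- arXiv:2210.02722 — 12 statements merged into one kernel-verified Lean document; each statement's English description precedes it below -/
import Mathlib

section
/- Let k, h, d, b_1, …, b_k be positive integers and a ≥ 2, set A = {a, ha + d·b_1, …, ha + d·b_k}, and assume the elements of A have gcd 1 and gcd(a, d) = 1. Then for every 0 ≤ r ≤ a−1, N_{(d·r) mod a} equals the minimum, over all m ∈ ℕ such that ma + r can be written as Σ_{i=1}^k b_i x_i with x_i ∈ ℕ, of the quantity O_B(ma + r)·h·a + (ma + r)·d, where B = (b_1, …, b_k). -/
/-- `Nr S a r` is the least element of the additive submonoid of `ℕ` generated by `S`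
that is congruent to `r` modulo `a`. -/
noncomputable def Nr (S : Set ℕ) (a r : ℕ) : ℕ :=
  sInf {n : ℕ | n ∈ AddSubmonoid.closure S ∧ n % a = r}

/-- `OB b M` is the minimum of `x₁ + ⋯ + x_k` over tuples with `∑ bᵢ xᵢ = M`. -/
noncomputable def OB {k : ℕ} (b : Fin k → ℕ) (M : ℕ) : ℕ :=
  sInf {s : ℕ | ∃ x : Fin k → ℕ, ∑ i, b i * x i = M ∧ ∑ i, x i = s}

lemma mem_cl {k : ℕ} (f : Fin k → ℕ) (a n : ℕ) :
    n ∈ AddSubmonoid.closure (({a} : Set ℕ) ∪ Set.range f) ↔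
      ∃ y : ℕ, ∃ x : Fin k → ℕ, n = y * a + ∑ i, x i * f i := by
  constructor
  · intro hn
    induction hn using AddSubmonoid.closure_induction with
    | mem s hs =>
      rcases hs with hs | ⟨i, rfl⟩
      · exact ⟨1, 0, by simp [Set.mem_singleton_iff.mp hs]⟩
      · exact ⟨0, Pi.single i 1, by simp [Pi.single_apply]⟩
    | zero => exact ⟨0, 0, by simp⟩
    | add p q _ _ hp hq =>
      obtain ⟨y1, x1, rfl⟩ := hp
      obtain ⟨y2, x2, rfl⟩ := hq
      exact ⟨y1 + y2, x1 + x2, by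
        simp [add_mul, Finset.sum_add_distrib]; ring⟩
  · rintro ⟨y, x, rfl⟩
    apply add_mem
    · rw [← smul_eq_mul]
      exact nsmul_mem (AddSubmonoid.subset_closure (show a ∈ ({a} : Set ℕ) ∪ Set.range f from Set.mem_union_left _ rfl)) y
    · exact sum_mem fun i _ => by
        rw [← smul_eq_mul]
        exact nsmul_mem (AddSubmonoid.subset_closure (show f i ∈ ({a} : Set ℕ) ∪ Set.range f from Set.mem_union_right _ ⟨i, rfl⟩)) (x i)

lemma sInf_eq_of_subset {A B : Set ℕ} (hBA : B ⊆ A) (hAB : ∀ n ∈ A, ∃ t ∈ B, t ≤ n) :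
    sInf A = sInf B := by
  rcases A.eq_empty_or_nonempty with hA | hA
  · have hB : B = ∅ := Set.eq_empty_of_subset_empty (hA ▸ hBA)
    rw [hA, hB]
  · obtain ⟨t, htB, htle⟩ := hAB _ (Nat.sInf_mem hA)
    have hB : B.Nonempty := ⟨t, htB⟩
    exact le_antisymm (Nat.sInf_le (hBA (Nat.sInf_mem hB)))
      (le_trans (Nat.sInf_le htB) htle)

theorem stmt1 (k h d a : ℕ) (b : Fin k → ℕ)
    (hk : 0 < k) (hh : 0 < h) (hd : 0 < d) (hb : ∀ i, 0 < b i) (ha : 2 ≤ a)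
    (hgcd : Nat.gcd a (Finset.univ.gcd (fun i => h * a + d * b i)) = 1)
    (had : Nat.gcd a d = 1) :
    ∀ r < a,
      Nr (({a} : Set ℕ) ∪ Set.range (fun i => h * a + d * b i)) a (d * r % a)
        = sInf {N : ℕ | ∃ m : ℕ, (∃ x : Fin k → ℕ, ∑ i, b i * x i = m * a + r) ∧
            N = OB b (m * a + r) * h * a + (m * a + r) * d} := by
  intro r hr
  unfold Nr
  apply sInf_eq_of_subset
  · -- T ⊆ L
    rintro N ⟨m, ⟨x, hx⟩, rfl⟩
    set M := m * a + r with hM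
    have hne : {s : ℕ | ∃ x : Fin k → ℕ, ∑ i, b i * x i = M ∧ ∑ i, x i = s}.Nonempty :=
      ⟨∑ i, x i, x, hx, rfl⟩
    obtain ⟨x', hx', hs'⟩ := Nat.sInf_mem hne
    constructor
    · rw [mem_cl]
      refine ⟨0, x', ?_⟩
      have : ∑ i, x' i * (h * a + d * b i)
          = (∑ i, x' i) * (h * a) + d * ∑ i, b i * x' i := by
        rw [Finset.sum_mul, Finset.mul_sum, ← Finset.sum_add_distrib]
        exact Finset.sum_congr rfl fun i _ => by ring
      rw [this, hx', hs', OB]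
      ring
    · show (OB b M * h * a + M * d) % a = d * r % a
      have : OB b M * h * a + M * d = d * r + (OB b M * h + m * d) * a := by
        rw [hM]; ring
      rw [this, Nat.add_mul_mod_self_right]
  · -- every n in L has t in T below it
    rintro n ⟨hcl, hmod⟩
    rw [mem_cl] at hcl
    obtain ⟨y, x, rfl⟩ := hcl
    set M := ∑ i, b i * x i with hMdef
    have hsum : ∑ i, x i * (h * a + d * b i)
        = (∑ i, x i) * (h * a) + d * M := by
      rw [Finset.sum_mul, Finset.mul_sum, ← Finset.sum_add_distrib]
      exact Finset.sum_congr rfl fun i _ => by ring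
    -- congruence: d*M ≡ d*r [MOD a]
    have hMr : M % a = r := by
      have h1 : (y * a + ∑ i, x i * (h * a + d * b i)) % a = d * M % a := by
        rw [hsum]
        have : y * a + ((∑ i, x i) * (h * a) + d * M)
            = d * M + (y + (∑ i, x i) * h) * a := by ring
        rw [this, Nat.add_mul_mod_self_right]
      have h2 : d * M ≡ d * r [MOD a] := by
        unfold Nat.ModEq
        rw [← h1, hmod]
      have h3 : M ≡ r [MOD a] :=
        (Nat.ModEq.cancel_left_of_coprime had h2)
      calc M % a = r % a := h3
        _ = r := Nat.mod_eq_of_lt hr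
    have hMeq : M / a * a + r = M := by
      conv_rhs => rw [← Nat.div_add_mod M a, hMr]
      ring
    refine ⟨OB b M * h * a + M * d, ⟨M / a, ⟨x, by rw [hMeq]⟩, by rw [hMeq]⟩, ?_⟩
    have hOB : OB b M ≤ ∑ i, x i := Nat.sInf_le ⟨x, rfl, rfl⟩
    rw [hsum]
    calc OB b M * h * a + M * d ≤ (∑ i, x i) * h * a + M * d := by
          gcongr
      _ ≤ y * a + ((∑ i, x i) * (h * a) + d * M) := by ring_nf; omega
end

section
/- Let a ≥ 2 and let S = {a} ∪ {a + i² : i a positive integer}. Then for every 1 ≤ r ≤ a−1, N_r = min over m ∈ ℕ of ( ι(ma + r)·a + (ma + r) ). -/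
/-- `iota n` is the least `s ≥ 1` such that `n` is a sum of `s` squares of positive integers. -/
noncomputable def iota (n : ℕ) : ℕ :=
  sInf {s : ℕ | ∃ c : Fin s → ℕ, (∀ i, 0 < c i) ∧ ∑ i, (c i) ^ 2 = n}

lemma iota_spec (n : ℕ) (hn : 1 ≤ n) :
    ∃ c : Fin (iota n) → ℕ, (∀ i, 0 < c i) ∧ ∑ i, (c i) ^ 2 = n := by
  have hne : (iota n) ∈ {s : ℕ | ∃ c : Fin s → ℕ, (∀ i, 0 < c i) ∧ ∑ i, (c i) ^ 2 = n} := by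
    apply Nat.sInf_mem
    exact ⟨n, fun _ => 1, fun _ => one_pos, by simp⟩
  exact hne

lemma iota_le (n s : ℕ) (c : Fin s → ℕ) (hc : ∀ i, 0 < c i) (hsum : ∑ i, (c i) ^ 2 = n) :
    iota n ≤ s :=
  Nat.sInf_le ⟨c, hc, hsum⟩

lemma sq_mem_closure_iff (a n : ℕ) :
    n ∈ AddSubmonoid.closure (({a} : Set ℕ) ∪ {m : ℕ | ∃ i : ℕ, 0 < i ∧ m = a + i ^ 2}) ↔
    ∃ t s, s ≤ t ∧ ∃ c : Fin s → ℕ, (∀ i, 0 < c i) ∧ n = t * a + ∑ i, (c i) ^ 2 := by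
  constructor
  · intro h
    induction h using AddSubmonoid.closure_induction with
    | mem x hx =>
      rcases hx with hx | ⟨i, hi, rfl⟩
      · refine ⟨1, 0, by omega, Fin.elim0, fun i => i.elim0, by simp [hx.symm]⟩
      · exact ⟨1, 1, le_refl 1, fun _ => i, fun _ => hi, by simp⟩
    | zero => exact ⟨0, 0, le_refl 0, Fin.elim0, fun i => i.elim0, by simp⟩
    | add x y hx hy ihx ihy =>
      obtain ⟨t1, s1, hs1, c1, hc1, rfl⟩ := ihx
      obtain ⟨t2, s2, hs2, c2, hc2, rfl⟩ := ihy
      refine ⟨t1 + t2, s1 + s2, by omega, Fin.append c1 c2, ?_, ?_⟩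
      · intro i
        rcases i with ⟨i, hi⟩
        by_cases h : i < s1
        · simpa [Fin.append, Fin.addCases, h] using hc1 ⟨i, h⟩
        · simpa [Fin.append, Fin.addCases, h] using hc2 ⟨i - s1, by omega⟩
      · rw [Fin.sum_univ_add]
        simp [Fin.append_left, Fin.append_right]
        ring
  · rintro ⟨t, s, hst, c, hc, rfl⟩
    have ha : a ∈ AddSubmonoid.closure (({a} : Set ℕ) ∪ {m : ℕ | ∃ i : ℕ, 0 < i ∧ m = a + i ^ 2}) :=
      AddSubmonoid.subset_closure (Or.inl rfl)
    have key : t * a + ∑ i, (c i) ^ 2 = (t - s) • a + ∑ i : Fin s, (a + (c i) ^ 2) := by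
      rw [Finset.sum_add_distrib, Finset.sum_const, Finset.card_univ, Fintype.card_fin,
        smul_eq_mul, smul_eq_mul]
      have : t * a = (t - s) * a + s * a := by
        rw [← Nat.add_mul]; congr 1; omega
      omega
    rw [key]
    refine AddSubmonoid.add_mem _ (AddSubmonoid.nsmul_mem _ ha (t - s)) (AddSubmonoid.sum_mem _ ?_)
    intro i _
    exact AddSubmonoid.subset_closure (Or.inr ⟨c i, hc i, rfl⟩)

theorem stmt3 (a : ℕ) (ha : 2 ≤ a) :
    ∀ r : ℕ, 1 ≤ r → r ≤ a - 1 →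
      Nr (({a} : Set ℕ) ∪ {n : ℕ | ∃ i : ℕ, 0 < i ∧ n = a + i ^ 2}) a r
        = sInf (Set.range fun m : ℕ => iota (m * a + r) * a + (m * a + r)) := by
  intro r hr1 hr2
  have hra : r < a := by omega
  -- every element of B is in A
  have hBsubA : ∀ m : ℕ,
      iota (m * a + r) * a + (m * a + r) ∈
        {n : ℕ | n ∈ AddSubmonoid.closure (({a} : Set ℕ) ∪ {n : ℕ | ∃ i : ℕ, 0 < i ∧ n = a + i ^ 2})
          ∧ n % a = r} := by
    intro m
    obtain ⟨c, hc, hsum⟩ := iota_spec (m * a + r) (by omega)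
    constructor
    · rw [sq_mem_closure_iff]
      refine ⟨iota (m * a + r), iota (m * a + r), le_refl _, c, hc, ?_⟩
      rw [hsum]
    · rw [Nat.add_comm, Nat.add_mul_mod_self_right, Nat.add_comm (m * a) r,
        Nat.add_mul_mod_self_right]
      exact Nat.mod_eq_of_lt hra
  unfold Nr
  apply le_antisymm
  · -- sInf A ≤ sInf B
    have hBne : (Set.range fun m : ℕ => iota (m * a + r) * a + (m * a + r)).Nonempty :=
      ⟨_, ⟨0, rfl⟩⟩
    obtain ⟨m, hm⟩ := Nat.sInf_mem hBne
    rw [← hm]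
    exact Nat.sInf_le (hBsubA m)
  · -- sInf B ≤ sInf A
    have hAne : {n : ℕ | n ∈ AddSubmonoid.closure (({a} : Set ℕ) ∪ {n : ℕ | ∃ i : ℕ, 0 < i ∧ n = a + i ^ 2})
          ∧ n % a = r}.Nonempty := ⟨_, hBsubA 0⟩
    obtain ⟨hmem, hmod⟩ := Nat.sInf_mem hAne
    set n := sInf {n : ℕ | n ∈ AddSubmonoid.closure (({a} : Set ℕ) ∪ {n : ℕ | ∃ i : ℕ, 0 < i ∧ n = a + i ^ 2})
          ∧ n % a = r} with hn
    rw [sq_mem_closure_iff] at hmem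
    obtain ⟨t, s, hst, c, hc, hnform⟩ := hmem
    set q := ∑ i, (c i) ^ 2 with hq
    have hqmod : q % a = r := by
      have := hmod
      rw [hnform] at this
      rwa [Nat.mul_add_mod' t a q] at this
    have hq1 : 1 ≤ q := by
      rcases Nat.eq_zero_or_pos q with h | h
      · rw [h] at hqmod; simp at hqmod; omega
      · exact h
    have hiq : iota q ≤ s := iota_le q s c hc rfl
    have hqeq : q = (q / a) * a + r := by
      conv_lhs => rw [← Nat.div_add_mod q a]
      rw [hqmod, Nat.mul_comm]
    calc sInf (Set.range fun m : ℕ => iota (m * a + r) * a + (m * a + r))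
        ≤ iota ((q / a) * a + r) * a + ((q / a) * a + r) := Nat.sInf_le ⟨q / a, rfl⟩
      _ = iota q * a + q := by rw [← hqeq]
      _ ≤ t * a + q := by
          have : iota q ≤ t := le_trans hiq hst
          exact Nat.add_le_add_right (Nat.mul_le_mul_right a this) q
      _ = n := hnform.symm
end

section
/- Let a > 2 and let S = {a} ∪ {a + i² : i a positive integer}. If there exists r with 1 ≤ r ≤ a−1 such that ι(r) = 4, ι(a + r) ≥ 3, and ι(2a + r) ≥ 2, then the Frobenius number satisfies g(S) = 3a + max{ r : 1 ≤ r ≤ a−1, ι(r) = 4, ι(a + r) ≥ 3, ι(2a + r) ≥ 2 }. -/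
lemma list_sum_sq (l : List ℕ) : ∑ i : Fin l.length, (l.get i) ^ 2 = (l.map (· ^ 2)).sum := by
  conv_rhs => rw [← List.ofFn_get l]
  rw [List.map_ofFn, List.sum_ofFn]
  rfl

lemma filter_sum_sq (l : List ℕ) :
    ((l.filter (· ≠ 0)).map (· ^ 2)).sum = (l.map (· ^ 2)).sum := by
  induction l with
  | nil => rfl
  | cons x xs ih =>
    by_cases hx : x = 0
    · subst hx
      simpa [List.filter_cons] using ih
    · simp only [ne_eq, decide_not] at ih
      simp [List.filter_cons, hx, ih]

lemma iota_le_of_fn {k n : ℕ} (c : Fin k → ℕ) (h : ∑ i, c i ^ 2 = n) : iota n ≤ k := by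
  set l : List ℕ := (List.ofFn c).filter (· ≠ 0) with hl
  have hmem : l.length ∈ {s : ℕ | ∃ c : Fin s → ℕ, (∀ i, 0 < c i) ∧ ∑ i, (c i) ^ 2 = n} := by
    refine ⟨l.get, fun i => ?_, ?_⟩
    · have := List.of_mem_filter (List.get_mem l i)
      exact Nat.pos_of_ne_zero (by simpa using this)
    · rw [list_sum_sq, hl, filter_sum_sq, List.map_ofFn, List.sum_ofFn, ← h]
      rfl
  calc iota n ≤ l.length := Nat.sInf_le hmem
    _ ≤ (List.ofFn c).length := List.length_filter_le _ _
    _ = k := by simp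

lemma iota_le_four (n : ℕ) : iota n ≤ 4 := by
  obtain ⟨a, b, c, d, h⟩ := Nat.sum_four_squares n
  refine iota_le_of_fn ![a, b, c, d] ?_
  rw [Fin.sum_univ_four, ← h]
  simp

lemma iota_mem (n : ℕ) :
    ∃ c : Fin (iota n) → ℕ, (∀ i, 0 < c i) ∧ ∑ i, (c i) ^ 2 = n := by
  have hne : {s : ℕ | ∃ c : Fin s → ℕ, (∀ i, 0 < c i) ∧ ∑ i, (c i) ^ 2 = n}.Nonempty := by
    obtain ⟨a, b, c, d, h⟩ := Nat.sum_four_squares n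
    set l : List ℕ := ([a, b, c, d]).filter (· ≠ 0) with hl
    refine ⟨l.length, l.get, fun i => ?_, ?_⟩
    · have := List.of_mem_filter (List.get_mem l i)
      exact Nat.pos_of_ne_zero (by simpa using this)
    · rw [list_sum_sq, hl, filter_sum_sq]
      simp [← h]
      ring
  exact Nat.sInf_mem hne

lemma iota_pos {n : ℕ} (hn : 0 < n) : 0 < iota n := by
  rcases Nat.eq_zero_or_pos (iota n) with h | h
  · obtain ⟨c, _, hc⟩ := iota_mem n
    have hemp : IsEmpty (Fin (iota n)) := by rw [h]; infer_instance
    have : n = 0 := by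
      rw [← hc]
      exact Finset.sum_eq_zero fun i _ => (hemp.false i).elim
    omega
  · exact h

lemma exists_pad {m : ℕ} (k : ℕ) (h : iota m ≤ k) : ∃ c : Fin k → ℕ, ∑ i, c i ^ 2 = m := by
  obtain ⟨c₀, _, hc₀⟩ := iota_mem m
  set l : List ℕ := List.ofFn c₀ ++ List.replicate (k - iota m) 0 with hl
  have hlen : l.length = k := by simp [hl]; omega
  refine ⟨fun i => l.get (Fin.cast hlen.symm i), ?_⟩
  have heq : ∑ i : Fin k, (l.get (Fin.cast hlen.symm i)) ^ 2
      = ∑ i : Fin l.length, (l.get i) ^ 2 :=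
    Fin.sum_congr' (fun j : Fin l.length => (l.get j) ^ 2) hlen.symm
  rw [heq, list_sum_sq, hl]
  simpa [List.map_ofFn, List.sum_ofFn, Function.comp] using hc₀

lemma mem_closure_iff' (a n : ℕ) :
    n ∈ AddSubmonoid.closure (({a} : Set ℕ) ∪ {n : ℕ | ∃ i : ℕ, 0 < i ∧ n = a + i ^ 2}) ↔
      ∃ (k : ℕ) (c : Fin k → ℕ), n = k * a + ∑ i, c i ^ 2 := by
  constructor
  · intro h
    induction h using AddSubmonoid.closure_induction with
    | mem x hx =>
      rcases hx with hx | ⟨i, _, hi⟩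
      · exact ⟨1, fun _ => 0, by simp [Set.mem_singleton_iff.mp hx]⟩
      · exact ⟨1, fun _ => i, by simp [hi]⟩
    | zero => exact ⟨0, fun i => 0, by simp⟩
    | add x y hx hy ihx ihy =>
      obtain ⟨k₁, c₁, rfl⟩ := ihx
      obtain ⟨k₂, c₂, rfl⟩ := ihy
      refine ⟨k₁ + k₂, Fin.append c₁ c₂, ?_⟩
      rw [Fin.sum_univ_add]
      simp only [Fin.append_left, Fin.append_right]
      ring
  · rintro ⟨k, c, rfl⟩
    have hsum : k * a + ∑ i, c i ^ 2 = ∑ i : Fin k, (a + c i ^ 2) := by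
      rw [Finset.sum_add_distrib, Finset.sum_const, Finset.card_univ, Fintype.card_fin,
        smul_eq_mul]
    rw [hsum]
    refine AddSubmonoid.sum_mem _ fun i _ => AddSubmonoid.subset_closure ?_
    rcases Nat.eq_zero_or_pos (c i) with h | h
    · left; simp [h]
    · right; exact ⟨c i, h, rfl⟩

theorem stmt4 (a : ℕ) (ha : 2 < a)
    (hex : ∃ r : ℕ, 1 ≤ r ∧ r ≤ a - 1 ∧ iota r = 4 ∧ 3 ≤ iota (a + r) ∧ 2 ≤ iota (2 * a + r)) :
    IsGreatest
      {n : ℕ | n ∉ AddSubmonoid.closure (({a} : Set ℕ) ∪ {n : ℕ | ∃ i : ℕ, 0 < i ∧ n = a + i ^ 2})}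
      (3 * a + sSup {r : ℕ | 1 ≤ r ∧ r ≤ a - 1 ∧ iota r = 4 ∧ 3 ≤ iota (a + r) ∧
        2 ≤ iota (2 * a + r)}) := by
  set R : Set ℕ := {r : ℕ | 1 ≤ r ∧ r ≤ a - 1 ∧ iota r = 4 ∧ 3 ≤ iota (a + r) ∧
    2 ≤ iota (2 * a + r)} with hRdef
  have hRne : R.Nonempty := hex
  have hbdd : BddAbove R := ⟨a - 1, fun r hr => hr.2.1⟩
  have hmem : sSup R ∈ R := Nat.sSup_mem hRne hbdd
  set r₀ := sSup R with hr₀def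
  obtain ⟨hr1, hr2, hr4, hr3a, hr2a⟩ := hmem
  have hra : r₀ < a := by omega
  constructor
  · -- 3a + r₀ is not representable
    simp only [Set.mem_setOf_eq]
    rw [mem_closure_iff']
    rintro ⟨k, c, hkc⟩
    have hml0 : iota (∑ i, c i ^ 2) ≤ k := iota_le_of_fn c rfl
    obtain ⟨m, hm, hml⟩ : ∃ m, 3 * a + r₀ = k * a + m ∧ iota m ≤ k := ⟨_, hkc, hml0⟩
    clear hkc hml0 c
    have hk4 : k ≤ 3 := by
      by_contra hk
      push_neg at hk
      have h4 : 4 * a ≤ k * a := Nat.mul_le_mul_right a hk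
      have : k * a ≤ 3 * a + r₀ := by omega
      omega
    interval_cases k
    · have hm0 : m = 3 * a + r₀ := by omega
      have := iota_pos (n := m) (by omega)
      omega
    · have hm0 : m = 2 * a + r₀ := by omega
      rw [hm0] at hml
      omega
    · have hm0 : m = a + r₀ := by omega
      rw [hm0] at hml
      omega
    · have hm0 : m = r₀ := by omega
      rw [hm0] at hml
      omega
  · -- upper bound
    intro n hn
    simp only [Set.mem_setOf_eq] at hn
    by_contra hgt
    push_neg at hgt
    apply hn
    rw [mem_closure_iff']
    obtain ⟨k, m, h1, hma⟩ : ∃ k m, n = k * a + m ∧ m < a :=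
      ⟨n / a, n % a, by rw [mul_comm]; exact (Nat.div_add_mod n a).symm,
        Nat.mod_lt _ (by omega)⟩
    have hk3 : 3 ≤ k := by
      by_contra hk
      push_neg at hk
      interval_cases k <;> omega
    rcases Nat.eq_zero_or_pos m with hm0 | hm1
    · exact ⟨k, fun _ => 0, by rw [h1, hm0]; simp⟩
    have him4 : iota m ≤ 4 := iota_le_four m
    rcases Nat.lt_or_ge (iota m) 4 with him | him
    · obtain ⟨c, hc⟩ := exists_pad (m := m) k (by omega)
      exact ⟨k, c, by rw [hc]; exact h1⟩
    rcases Nat.lt_or_ge 3 k with hk4 | hk4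
    · obtain ⟨c, hc⟩ := exists_pad (m := m) k (by omega)
      exact ⟨k, c, by rw [hc]; exact h1⟩
    have hkeq : k = 3 := by omega
    rw [hkeq] at h1
    have hmr : r₀ < m := by omega
    have hnotR : m ∉ R := fun hmm => absurd (le_csSup hbdd hmm) (by omega)
    have hcase : iota (a + m) ≤ 2 ∨ iota (2 * a + m) ≤ 1 := by
      by_contra hcc
      push_neg at hcc
      exact hnotR ⟨hm1, by omega, by omega, by omega, by omega⟩
    rcases hcase with hc1 | hc1
    · obtain ⟨c, hc⟩ := exists_pad (m := a + m) 2 (by omega)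
      exact ⟨2, c, by rw [hc]; omega⟩
    · obtain ⟨c, hc⟩ := exists_pad (m := 2 * a + m) 1 (by omega)
      exact ⟨1, c, by rw [hc]; omega⟩
end

section
/- Assume the strong Goldbach conjecture: every even integer greater than 2 is the sum of two primes. Then for every positive integer n: τ(n) = 1 if n ∈ 𝒫𝒩 ∪ {1}; τ(n) = 3 if n is odd and neither n nor n − 2 belongs to 𝒫𝒩 ∪ {1}; and τ(n) = 2 in all other cases. -/
/-- `tau n` is the least `s` such that `n` is a sum of `s` terms, each a prime or `1`. -/
noncomputable def tau (n : ℕ) : ℕ :=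
  sInf {s : ℕ | ∃ c : Fin s → ℕ, (∀ i, Nat.Prime (c i) ∨ c i = 1) ∧ ∑ i, c i = n}

lemma tau_eq_of (n k : ℕ)
    (hk : k ∈ {s : ℕ | ∃ c : Fin s → ℕ, (∀ i, Nat.Prime (c i) ∨ c i = 1) ∧ ∑ i, c i = n})
    (hlt : ∀ m < k, m ∉ {s : ℕ | ∃ c : Fin s → ℕ, (∀ i, Nat.Prime (c i) ∨ c i = 1) ∧ ∑ i, c i = n}) :
    tau n = k := by
  refine le_antisymm (Nat.sInf_le hk) ?_
  by_contra h
  push_neg at h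
  exact hlt _ h (Nat.sInf_mem ⟨k, hk⟩)

lemma not_one_mem (n : ℕ) (hnp : ¬(Nat.Prime n ∨ n = 1)) :
    1 ∉ {s : ℕ | ∃ c : Fin s → ℕ, (∀ i, Nat.Prime (c i) ∨ c i = 1) ∧ ∑ i, c i = n} := by
  rintro ⟨c, hc, hsum⟩
  simp [Fin.sum_univ_one] at hsum
  exact hnp (hsum ▸ hc 0)

lemma not_zero_mem (n : ℕ) (hn : 0 < n) :
    0 ∉ {s : ℕ | ∃ c : Fin s → ℕ, (∀ i, Nat.Prime (c i) ∨ c i = 1) ∧ ∑ i, c i = n} := by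
  rintro ⟨c, _, hsum⟩
  simp at hsum
  omega

theorem stmt6
    (goldbach : ∀ n : ℕ, Even n → 2 < n → ∃ p q : ℕ, Nat.Prime p ∧ Nat.Prime q ∧ n = p + q)
    (n : ℕ) (hn : 0 < n) :
    ((Nat.Prime n ∨ n = 1) → tau n = 1) ∧
    (Odd n ∧ ¬(Nat.Prime n ∨ n = 1) ∧ ¬(Nat.Prime (n - 2) ∨ n - 2 = 1) → tau n = 3) ∧
    (¬(Nat.Prime n ∨ n = 1) ∧
      ¬(Odd n ∧ ¬(Nat.Prime n ∨ n = 1) ∧ ¬(Nat.Prime (n - 2) ∨ n - 2 = 1)) → tau n = 2) := by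
  refine ⟨?_, ?_, ?_⟩
  · intro h
    refine tau_eq_of n 1 ⟨fun _ => n, fun _ => h, by simp⟩ ?_
    intro m hm
    interval_cases m
    exact not_zero_mem n hn
  · rintro ⟨hodd, hnp, h2⟩
    have hne1 : n ≠ 1 := fun h => hnp (Or.inr h)
    have hne3 : n ≠ 3 := fun h => hnp (Or.inl (h ▸ Nat.prime_three))
    have h5 : 5 ≤ n := by
      rcases hodd with ⟨k, hk⟩; omega
    have heven : Even (n - 1) := by
      rcases hodd with ⟨k, hk⟩; exact ⟨k, by omega⟩
    obtain ⟨p, q, hp, hq, hpq⟩ := goldbach (n - 1) heven (by omega)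
    refine tau_eq_of n 3 ⟨![1, p, q], ?_, ?_⟩ ?_
    · intro i
      fin_cases i <;> simp [hp, hq]
    · simp [Fin.sum_univ_three]; omega
    · intro m hm
      interval_cases m
      · exact not_zero_mem n hn
      · exact not_one_mem n hnp
      · rintro ⟨c, hc, hsum⟩
        rw [Fin.sum_univ_two] at hsum
        have h0 := hc 0
        have h1 := hc 1
        -- parity analysis
        rcases h0 with h0p | h01 <;> rcases h1 with h1p | h11
        · -- both prime, sum odd ⇒ one is 2
          rcases Nat.even_or_odd (c 0) with he | ho
          · have : c 0 = 2 := (Nat.Prime.even_iff h0p).mp he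
            have : Nat.Prime (n - 2) := by
              have : c 1 = n - 2 := by omega
              exact this ▸ h1p
            exact h2 (Or.inl this)
          · have he1 : Even (c 1) := by
              rcases ho with ⟨a, ha⟩
              rcases hodd with ⟨b, hb⟩
              refine ⟨(c 1) / 2, ?_⟩
              omega
            have : c 1 = 2 := (Nat.Prime.even_iff h1p).mp he1
            have : Nat.Prime (n - 2) := by
              have : c 0 = n - 2 := by omega
              exact this ▸ h0p
            exact h2 (Or.inl this)
        · -- c1 = 1, c0 = n-1 even prime ⇒ = 2 ⇒ n = 3
          have heo : Even (c 0) := by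
            rcases hodd with ⟨b, hb⟩
            refine ⟨(c 0) / 2, ?_⟩
            have := h0p.two_le
            omega
          have := (Nat.Prime.even_iff h0p).mp heo
          omega
        · have heo : Even (c 1) := by
            rcases hodd with ⟨b, hb⟩
            refine ⟨(c 1) / 2, ?_⟩
            have := h1p.two_le
            omega
          have := (Nat.Prime.even_iff h1p).mp heo
          omega
        · rcases hodd with ⟨b, hb⟩; omega
  · rintro ⟨hnp, h2⟩
    push_neg at h2
    have hwit : ∃ p q : ℕ, Nat.Prime p ∧ Nat.Prime q ∧ n = p + q := by
      rcases Nat.even_or_odd n with he | ho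
      · have hne2 : n ≠ 2 := fun h => hnp (Or.inl (h ▸ Nat.prime_two))
        have : 2 < n := by
          rcases he with ⟨k, hk⟩
          have hne1 : n ≠ 1 := fun h => hnp (Or.inr h)
          omega
        exact goldbach n he this
      · rcases h2 ho ⟨fun h => hnp (Or.inl h), fun h => hnp (Or.inr h)⟩ with hp | h1
        · have h2n : 2 ≤ n := by have := hp.two_le; omega
          exact ⟨2, n - 2, Nat.prime_two, hp, by omega⟩
        · exact absurd (Or.inl (show Nat.Prime n by
            have : n = 3 := by omega
            exact this ▸ Nat.prime_three)) hnp
    obtain ⟨p, q, hp, hq, hpq⟩ := hwit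
    refine tau_eq_of n 2 ⟨![p, q], ?_, ?_⟩ ?_
    · intro i; fin_cases i <;> simp [hp, hq]
    · simp [Fin.sum_univ_two]; omega
    · intro m hm
      interval_cases m
      · exact not_zero_mem n hn
      · exact not_one_mem n hnp
end

section
/- Assume the strong Goldbach conjecture: every even integer greater than 2 is the sum of two primes (this guarantees τ(n) ≤ 3 for all positive integers n). Let a > 2 and let S = {a} ∪ {a + 1} ∪ {a + p : p prime}. Suppose there is no r with 1 ≤ r ≤ a−1 satisfying τ(r) = 3 and τ(a + r) ≥ 2, but there exists r with 1 ≤ r ≤ a−1 satisfying at least one of: (1) τ(r) = 3 and τ(a + r) = 1; (2) τ(r) = 2. Then g(S) = a + max{ r : 1 ≤ r ≤ a−1 and r satisfies condition (1) or (2) }. -/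
/-- `n` is a sum of `s` terms each prime or `1`. -/
def TauP (n s : ℕ) : Prop :=
  ∃ c : Fin s → ℕ, (∀ i, Nat.Prime (c i) ∨ c i = 1) ∧ ∑ i, c i = n

lemma tauP_self (n : ℕ) : TauP n n :=
  ⟨fun _ => 1, fun _ => Or.inr rfl, by simp⟩

lemma tau_le_of (h : TauP n s) : tau n ≤ s := Nat.sInf_le h

lemma tauP_tau (n : ℕ) : TauP n (tau n) := by
  have h : {s : ℕ | TauP n s}.Nonempty := ⟨n, tauP_self n⟩
  exact Nat.sInf_mem h

lemma tauP_zero : TauP 0 0 := ⟨fun i => i.elim0, fun i => i.elim0, by simp⟩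

lemma eq_zero_of_tau_zero (h : tau n = 0) : n = 0 := by
  have ht := tauP_tau n
  rw [h] at ht
  obtain ⟨c, _, hsum⟩ := ht
  simpa using hsum.symm

lemma tauP_one (h : Nat.Prime p ∨ p = 1) : TauP p 1 :=
  ⟨fun _ => p, fun _ => h, by simp⟩

lemma tauP_add (h1 : TauP m s) (h2 : TauP m' s') : TauP (m + m') (s + s') := by
  obtain ⟨c, hc, hsum⟩ := h1
  obtain ⟨c', hc', hsum'⟩ := h2
  refine ⟨Fin.append c c', ?_, ?_⟩
  · intro i
    rcases Nat.lt_or_ge (i : ℕ) s with h | h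
    · have : Fin.append c c' i = c (i.castLT h) := by
        simpa using Fin.append_left c c' (i.castLT h)
      rw [this]; exact hc _
    · obtain ⟨j, rfl⟩ : ∃ j : Fin s', i = Fin.natAdd s j := by
        refine ⟨⟨i - s, by omega⟩, ?_⟩
        ext; simp [Fin.natAdd]; omega
      rw [Fin.append_right]; exact hc' _
  · rw [Fin.sum_univ_add]
    simp only [Fin.append_left, Fin.append_right]
    omega

lemma tau_add_le (m m' : ℕ) : tau (m + m') ≤ tau m + tau m' :=
  tau_le_of (tauP_add (tauP_tau m) (tauP_tau m'))

lemma tau_pos (h : n ≠ 0) : 1 ≤ tau n := by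
  rcases Nat.eq_zero_or_pos (tau n) with h0 | h1
  · exact absurd (eq_zero_of_tau_zero h0) h
  · exact h1

lemma tauP_two (hp : Nat.Prime p) (hq : Nat.Prime q) : TauP (p + q) 2 := by
  refine ⟨![p, q], ?_, by simp [Fin.sum_univ_two]⟩
  intro i; fin_cases i <;> simp [hp, hq]

lemma tauP_three (hp : Nat.Prime p) (hq : Nat.Prime q) : TauP (1 + p + q) 3 := by
  refine ⟨![1, p, q], ?_, by simp [Fin.sum_univ_three]⟩
  intro i; fin_cases i <;> simp [hp, hq]

lemma tau_le_three
    (goldbach : ∀ n : ℕ, Even n → 2 < n → ∃ p q : ℕ, Nat.Prime p ∧ Nat.Prime q ∧ n = p + q)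
    (n : ℕ) : tau n ≤ 3 := by
  rcases Nat.eq_zero_or_pos n with rfl | hn
  · exact le_trans (tau_le_of tauP_zero) (by norm_num)
  by_cases h1 : n = 1
  · subst h1; exact le_trans (tau_le_of (tauP_one (Or.inr rfl))) (by norm_num)
  by_cases hp : Nat.Prime n
  · exact le_trans (tau_le_of (tauP_one (Or.inl hp))) (by norm_num)
  by_cases he : Even n
  · have h2 : 2 < n := by
      by_contra h
      push_neg at h
      interval_cases n
      · exact h1 rfl
      · exact hp Nat.prime_two
    obtain ⟨p, q, hp', hq', heq⟩ := goldbach n he h2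
    have : tau n ≤ 2 := by rw [heq]; exact tau_le_of (tauP_two hp' hq')
    omega
  · -- n odd, not prime, not 1, so n ≥ 9
    have h9 : 9 ≤ n := by
      by_contra h
      push_neg at h
      interval_cases n <;> revert hn h1 hp he <;> decide
    have he' : Even (n - 1) := by
      rcases Nat.even_or_odd n with h | h
      · exact absurd h he
      · rcases h with ⟨k, rfl⟩; exact ⟨k, by omega⟩
    obtain ⟨p, q, hp', hq', heq⟩ := goldbach (n - 1) he' (by omega)
    have : n = 1 + p + q := by omega
    exact tau_le_of (this ▸ tauP_three hp' hq')

lemma mem_closure_of_tau_le (a : ℕ) {m k : ℕ} (h : tau m ≤ k) :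
    k * a + m ∈ AddSubmonoid.closure
      (({a} : Set ℕ) ∪ {a + 1} ∪ {n : ℕ | ∃ p : ℕ, Nat.Prime p ∧ n = a + p}) := by
  obtain ⟨c, hc, hsum⟩ := tauP_tau m
  have key : k * a + m = (k - tau m) * a + ∑ i : Fin (tau m), (a + c i) := by
    have h1 : ∑ i : Fin (tau m), (a + c i) = tau m * a + m := by
      rw [Finset.sum_add_distrib, hsum, Finset.sum_const, Finset.card_univ,
        Fintype.card_fin, smul_eq_mul]
    rw [h1, ← add_assoc, ← add_mul, Nat.sub_add_cancel h]
  rw [key]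
  refine add_mem ?_ ?_
  · have ha : a ∈ AddSubmonoid.closure
        (({a} : Set ℕ) ∪ {a + 1} ∪ {n : ℕ | ∃ p : ℕ, Nat.Prime p ∧ n = a + p}) :=
      AddSubmonoid.subset_closure (Or.inl (Or.inl rfl))
    have := AddSubmonoid.nsmul_mem (AddSubmonoid.closure
        (({a} : Set ℕ) ∪ {a + 1} ∪ {n : ℕ | ∃ p : ℕ, Nat.Prime p ∧ n = a + p})) ha (k - tau m)
    simpa [nsmul_eq_mul] using this
  · refine AddSubmonoid.sum_mem _ (fun i _ => AddSubmonoid.subset_closure ?_)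
    rcases hc i with hp | h1
    · exact Or.inr ⟨c i, hp, rfl⟩
    · rw [h1]; exact Or.inl (Or.inr rfl)

lemma exists_of_mem_closure (a : ℕ) {x : ℕ}
    (hx : x ∈ AddSubmonoid.closure
      (({a} : Set ℕ) ∪ {a + 1} ∪ {n : ℕ | ∃ p : ℕ, Nat.Prime p ∧ n = a + p})) :
    ∃ k m : ℕ, x = k * a + m ∧ tau m ≤ k := by
  induction hx using AddSubmonoid.closure_induction with
  | mem x h =>
    rcases h with (h | h) | ⟨p, hp, rfl⟩
    · rw [Set.mem_singleton_iff] at h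
      subst h
      exact ⟨1, 0, by ring, (tau_le_of tauP_zero).trans (by omega)⟩
    · rw [Set.mem_singleton_iff] at h
      subst h
      exact ⟨1, 1, by ring, tau_le_of (tauP_one (Or.inr rfl))⟩
    · exact ⟨1, p, by ring, tau_le_of (tauP_one (Or.inl hp))⟩
  | zero => exact ⟨0, 0, by simp, tau_le_of tauP_zero⟩
  | add x y hx hy ihx ihy =>
    obtain ⟨k1, m1, rfl, h1⟩ := ihx
    obtain ⟨k2, m2, rfl, h2⟩ := ihy
    exact ⟨k1 + k2, m1 + m2, by ring,
      le_trans (tau_add_le m1 m2) (Nat.add_le_add h1 h2)⟩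

theorem stmt8
    (goldbach : ∀ n : ℕ, Even n → 2 < n → ∃ p q : ℕ, Nat.Prime p ∧ Nat.Prime q ∧ n = p + q)
    (a : ℕ) (ha : 2 < a)
    (hno : ¬ ∃ r : ℕ, 1 ≤ r ∧ r ≤ a - 1 ∧ tau r = 3 ∧ 2 ≤ tau (a + r))
    (hex : ∃ r : ℕ, 1 ≤ r ∧ r ≤ a - 1 ∧ ((tau r = 3 ∧ tau (a + r) = 1) ∨ tau r = 2)) :
    IsGreatest
      {n : ℕ | n ∉ AddSubmonoid.closure
        (({a} : Set ℕ) ∪ {a + 1} ∪ {n : ℕ | ∃ p : ℕ, Nat.Prime p ∧ n = a + p})}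
      (a + sSup {r : ℕ | 1 ≤ r ∧ r ≤ a - 1 ∧
        ((tau r = 3 ∧ tau (a + r) = 1) ∨ tau r = 2)}) := by
  push_neg at hno
  set B := {r : ℕ | 1 ≤ r ∧ r ≤ a - 1 ∧
      ((tau r = 3 ∧ tau (a + r) = 1) ∨ tau r = 2)} with hB
  have hBbdd : BddAbove B := ⟨a - 1, fun x hx => hx.2.1⟩
  have hRmem : sSup B ∈ B := Nat.sSup_mem hex hBbdd
  set R := sSup B with hRdef
  obtain ⟨hR1, hRa, hRtau⟩ := hRmem
  have hRtau2 : 2 ≤ tau R := by rcases hRtau with ⟨h3, _⟩ | h2 <;> omega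
  constructor
  · -- a + R not in the closure
    intro hmem
    obtain ⟨k, m, heq, htau⟩ := exists_of_mem_closure a hmem
    rcases Nat.lt_or_ge k 2 with hk | hk
    · interval_cases k
      · have : m = 0 := eq_zero_of_tau_zero (Nat.le_zero.mp htau)
        omega
      · have hm : m = R := by omega
        rw [hm] at htau; omega
    · have : 2 * a ≤ k * a := Nat.mul_le_mul_right a hk
      omega
  · -- upper bound
    intro n hn
    by_contra hlt
    push_neg at hlt
    apply hn
    have ha0 : 0 < a := by omega
    obtain ⟨q, r, hra, hneq⟩ : ∃ q r : ℕ, r < a ∧ q * a + r = n :=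
      ⟨n / a, n % a, Nat.mod_lt _ ha0, by rw [Nat.mul_comm]; exact Nat.div_add_mod n a⟩
    have hq1 : 1 ≤ q := by
      by_contra h0
      push_neg at h0
      have h0' : q = 0 := by omega
      rw [h0', zero_mul, zero_add] at hneq
      omega
    rcases Nat.eq_zero_or_pos r with hr0 | hr1
    · -- r = 0
      have : q * a + 0 ∈ AddSubmonoid.closure
          (({a} : Set ℕ) ∪ {a + 1} ∪ {n : ℕ | ∃ p : ℕ, Nat.Prime p ∧ n = a + p}) :=
        mem_closure_of_tau_le a ((tau_le_of tauP_zero).trans (Nat.zero_le q))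
      rw [hr0] at hneq
      rwa [hneq] at this
    · have htr3 : tau r ≤ 3 := tau_le_three goldbach r
      have htr1 : 1 ≤ tau r := tau_pos (by omega)
      have hmemB : ∀ x, tau x = 2 ∨ (tau x = 3 ∧ tau (a + x) = 1) → 1 ≤ x → x ≤ a - 1 → x ≤ R := by
        intro x hx h1 h2
        refine le_csSup hBbdd ?_
        exact ⟨h1, h2, hx.symm.imp (fun h => ⟨h.1, h.2⟩) id⟩
      rcases Nat.lt_or_ge q 2 with hq2 | hq2
      · -- q = 1, so n = a + r with r > R
        have hq1' : q = 1 := by omega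
        rw [hq1', one_mul] at hneq
        have hrR : R < r := by omega
        have htr : tau r ≤ 1 := by
          by_contra htr
          push_neg at htr
          have hx : r ≤ R := by
            rcases (by omega : tau r = 2 ∨ tau r = 3) with h2 | h3
            · exact hmemB r (Or.inl h2) hr1 (by omega)
            · have har1 : 1 ≤ tau (a + r) := tau_pos (by omega)
              have har : tau (a + r) < 2 := hno r hr1 (by omega) h3
              exact hmemB r (Or.inr ⟨h3, by omega⟩) hr1 (by omega)
          omega
        have : 1 * a + r ∈ AddSubmonoid.closure
            (({a} : Set ℕ) ∪ {a + 1} ∪ {n : ℕ | ∃ p : ℕ, Nat.Prime p ∧ n = a + p}) :=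
          mem_closure_of_tau_le a htr
        rw [← hneq]
        simpa using this
      · rcases le_or_gt (tau r) q with hle | hgt
        · have : q * a + r ∈ AddSubmonoid.closure
              (({a} : Set ℕ) ∪ {a + 1} ∪ {n : ℕ | ∃ p : ℕ, Nat.Prime p ∧ n = a + p}) :=
            mem_closure_of_tau_le a hle
          rwa [hneq] at this
        · -- tau r = 3, q = 2
          have h3 : tau r = 3 := by omega
          have hq2' : q = 2 := by omega
          have har1 : 1 ≤ tau (a + r) := tau_pos (by omega)
          have har : tau (a + r) < 2 := hno r hr1 (by omega) h3
          have : 1 * a + (a + r) ∈ AddSubmonoid.closure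
              (({a} : Set ℕ) ∪ {a + 1} ∪ {n : ℕ | ∃ p : ℕ, Nat.Prime p ∧ n = a + p}) :=
            mem_closure_of_tau_le a (by omega)
          have heq2 : 1 * a + (a + r) = n := by rw [← hneq, hq2']; ring
          rwa [heq2] at this
end

section
/- Assume the strong Goldbach conjecture: every even integer greater than 2 is the sum of two primes (this guarantees τ(n) ≤ 3 for all positive integers n). Let a > 44 and let S = {a} ∪ {a + 1} ∪ {a + p : p prime}. Then the set { r : 1 ≤ r ≤ a−1, τ(r) = 3, τ(a + r) ≥ 2 } is nonempty, and the Frobenius number satisfies g(S) = 2a + max{ r : 1 ≤ r ≤ a−1, τ(r) = 3, τ(a + r) ≥ 2 }. -/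
namespace TauAux

def repSet (n : ℕ) : Set ℕ :=
  {s : ℕ | ∃ c : Fin s → ℕ, (∀ i, Nat.Prime (c i) ∨ c i = 1) ∧ ∑ i, c i = n}

lemma self_mem_repSet (n : ℕ) (_hn : 1 ≤ n) : n ∈ repSet n :=
  ⟨fun _ => 1, fun _ => Or.inr rfl, by simp⟩

lemma tau_mem (n : ℕ) (hn : 1 ≤ n) : tau n ∈ repSet n :=
  Nat.sInf_mem ⟨n, self_mem_repSet n hn⟩

lemma tau_le_of_rep {n s : ℕ} (h : s ∈ repSet n) : tau n ≤ s :=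
  Nat.sInf_le h

lemma zero_mem_iff (n : ℕ) : 0 ∈ repSet n ↔ n = 0 := by
  constructor
  · rintro ⟨c, _, hsum⟩
    simpa using hsum.symm
  · rintro rfl
    exact ⟨fun i => i.elim0, fun i => i.elim0, by simp⟩

lemma one_mem_iff (n : ℕ) : 1 ∈ repSet n ↔ (Nat.Prime n ∨ n = 1) := by
  constructor
  · rintro ⟨c, hc, hsum⟩
    have : c 0 = n := by simpa using hsum
    rw [← this]; exact hc 0
  · intro h
    exact ⟨fun _ => n, fun _ => h, by simp⟩

lemma two_mem_iff (n : ℕ) :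
    2 ∈ repSet n ↔ ∃ p q : ℕ, (Nat.Prime p ∨ p = 1) ∧ (Nat.Prime q ∨ q = 1) ∧ p + q = n := by
  constructor
  · rintro ⟨c, hc, hsum⟩
    exact ⟨c 0, c 1, hc 0, hc 1, by simpa [Fin.sum_univ_two] using hsum⟩
  · rintro ⟨p, q, hp, hq, hpq⟩
    refine ⟨![p, q], ?_, ?_⟩
    · intro i
      fin_cases i <;> simpa
    · simpa [Fin.sum_univ_two] using hpq

lemma tau_pos (n : ℕ) (hn : 1 ≤ n) : 1 ≤ tau n := by
  rcases Nat.eq_zero_or_pos (tau n) with h | h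
  · exfalso
    have := tau_mem n hn
    rw [h, zero_mem_iff] at this
    omega
  · exact h

lemma tau_of_P {n : ℕ} (h : Nat.Prime n ∨ n = 1) : tau n = 1 := by
  have h1 : 1 ≤ n := by
    rcases h with h | h
    · exact h.one_lt.le.trans' (by omega)
    · omega
  have := tau_le_of_rep ((one_mem_iff n).mpr h)
  have := tau_pos n h1
  omega

lemma tau_ge_two (n : ℕ) (hn : 1 ≤ n) (h : ¬(Nat.Prime n ∨ n = 1)) : 2 ≤ tau n := by
  have h1 := tau_pos n hn
  rcases Nat.lt_or_ge (tau n) 2 with h2 | h2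
  · exfalso
    have ht : tau n = 1 := by omega
    have := tau_mem n hn
    rw [ht, one_mem_iff] at this
    exact h this
  · exact h2

lemma tau_le_three
    (goldbach : ∀ n : ℕ, Even n → 2 < n → ∃ p q : ℕ, Nat.Prime p ∧ Nat.Prime q ∧ n = p + q)
    (n : ℕ) (hn : 1 ≤ n) : tau n ≤ 3 := by
  by_cases hP : Nat.Prime n ∨ n = 1
  · have := tau_of_P hP; omega
  · have hne1 : n ≠ 1 := fun h => hP (Or.inr h)
    have hne2 : n ≠ 2 := fun h => hP (Or.inl (h ▸ Nat.prime_two))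
    have hne3 : n ≠ 3 := fun h => hP (Or.inl (by rw [h]; norm_num))
    have hne5 : n ≠ 5 := fun h => hP (Or.inl (by rw [h]; norm_num))
    have hne7 : n ≠ 7 := fun h => hP (Or.inl (by rw [h]; norm_num))
    rcases Nat.even_or_odd n with he | ho
    · have h2 : 2 < n := by
        obtain ⟨k, hk⟩ := he; omega
      obtain ⟨p, q, hp, hq, hpq⟩ := goldbach n he h2
      have : 2 ∈ repSet n := (two_mem_iff n).mpr ⟨p, q, Or.inl hp, Or.inl hq, hpq.symm⟩
      have := tau_le_of_rep this; omega
    · have h9 : 9 ≤ n := by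
        obtain ⟨k, hk⟩ := ho; omega
      have heven : Even (n - 3) := by
        obtain ⟨k, hk⟩ := ho
        exact ⟨k - 1, by omega⟩
      obtain ⟨p, q, hp, hq, hpq⟩ := goldbach (n - 3) heven (by omega)
      have hrep : 3 ∈ repSet n := by
        refine ⟨![3, p, q], ?_, ?_⟩
        · intro i; fin_cases i
          · exact Or.inl (by norm_num)
          · simpa using Or.inl hp
          · simpa using Or.inl hq
        · simp [Fin.sum_univ_three]
          omega
      exact tau_le_of_rep hrep

lemma tau_add_le (m n : ℕ) (hm : 1 ≤ m) (hn : 1 ≤ n) : tau (m + n) ≤ tau m + tau n := by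
  obtain ⟨cm, hcm, hsm⟩ := tau_mem m hm
  obtain ⟨cn, hcn, hsn⟩ := tau_mem n hn
  refine tau_le_of_rep ⟨Fin.append cm cn, ?_, ?_⟩
  · intro i
    refine Fin.addCases (fun j => ?_) (fun j => ?_) i
    · rw [Fin.append_left]; exact hcm j
    · rw [Fin.append_right]; exact hcn j
  · rw [Fin.sum_univ_add]
    simp only [Fin.append_left, Fin.append_right]
    rw [hsm, hsn]

lemma tau_eq_three_odd
    (goldbach : ∀ n : ℕ, Even n → 2 < n → ∃ p q : ℕ, Nat.Prime p ∧ Nat.Prime q ∧ n = p + q)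
    (n : ℕ) (hodd : n % 2 = 1) (h9 : 9 ≤ n)
    (hnp : ¬ Nat.Prime n) (hnp2 : ¬ Nat.Prime (n - 2)) : tau n = 3 := by
  have hP : ¬(Nat.Prime n ∨ n = 1) := by
    rintro (h | h)
    · exact hnp h
    · omega
  have hle := tau_le_three goldbach n (by omega)
  have hge := tau_ge_two n (by omega) hP
  rcases Nat.lt_or_ge (tau n) 3 with h | h
  · exfalso
    have ht : tau n = 2 := by omega
    have hmem := tau_mem n (by omega)
    rw [ht, two_mem_iff] at hmem
    obtain ⟨p, q, hp, hq, hpq⟩ := hmem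
    -- one of p, q is even
    have hkey : ∀ x y : ℕ, (Nat.Prime x ∨ x = 1) → (Nat.Prime y ∨ y = 1) →
        x + y = n → x % 2 = 0 → False := by
      intro x y hx hy hxy hxe
      have hx2 : x = 2 := by
        rcases hx with hx | hx
        · exact (Nat.Prime.even_iff hx).mp (Nat.even_iff.mpr hxe)
        · omega
      have hyv : y = n - 2 := by omega
      rcases hy with hy | hy
      · rw [hyv] at hy; exact hnp2 hy
      · omega
    rcases Nat.even_or_odd p with hpe | hpo
    · exact hkey p q hp hq hpq (Nat.even_iff.mp hpe)
    · have hqe : q % 2 = 0 := by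
        obtain ⟨k, hk⟩ := hpo; omega
      exact hkey q p hq hp (by omega) hqe
  · omega

lemma not_prime_of_dvd {d n : ℕ} (hd : d ∣ n) (h1 : 2 ≤ d) (h2 : d < n) : ¬ n.Prime := by
  intro hp
  rcases Nat.Prime.eq_one_or_self_of_dvd hp d hd with h | h <;> omega

end TauAux

open TauAux in
theorem stmt9
    (goldbach : ∀ n : ℕ, Even n → 2 < n → ∃ p q : ℕ, Nat.Prime p ∧ Nat.Prime q ∧ n = p + q)
    (a : ℕ) (ha : 44 < a) :
    {r : ℕ | 1 ≤ r ∧ r ≤ a - 1 ∧ tau r = 3 ∧ 2 ≤ tau (a + r)}.Nonempty ∧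
    IsGreatest
      {n : ℕ | n ∉ AddSubmonoid.closure
        (({a} : Set ℕ) ∪ {a + 1} ∪ {n : ℕ | ∃ p : ℕ, Nat.Prime p ∧ n = a + p})}
      (2 * a + sSup {r : ℕ | 1 ≤ r ∧ r ≤ a - 1 ∧ tau r = 3 ∧ 2 ≤ tau (a + r)}) := by
  set S : Set ℕ := ({a} : Set ℕ) ∪ {a + 1} ∪ {n : ℕ | ∃ p : ℕ, Nat.Prime p ∧ n = a + p} with hS
  set T : Set ℕ := {r : ℕ | 1 ≤ r ∧ r ≤ a - 1 ∧ tau r = 3 ∧ 2 ≤ tau (a + r)} with hT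
  have ha_mem : a ∈ S := Or.inl (Or.inl rfl)
  have gen_mem : ∀ t : ℕ, (Nat.Prime t ∨ t = 1) → a + t ∈ S := by
    intro t ht
    rcases ht with ht | ht
    · exact Or.inr ⟨t, ht, rfl⟩
    · subst ht; exact Or.inl (Or.inr rfl)
  have mem_closure_of : ∀ k m : ℕ, 1 ≤ k → (m = 0 ∨ (1 ≤ m ∧ tau m ≤ k)) →
      k * a + m ∈ AddSubmonoid.closure S := by
    intro k m hk hm
    rcases hm with rfl | ⟨hm1, hmk⟩
    · have := nsmul_mem (AddSubmonoid.subset_closure ha_mem) k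
      simpa [smul_eq_mul] using this
    · obtain ⟨c, hc, hsum⟩ := tau_mem m hm1
      have key : (∑ i : Fin (tau m), (a + c i)) + (k - tau m) * a = k * a + m := by
        rw [Finset.sum_add_distrib, Finset.sum_const, Finset.card_univ, Fintype.card_fin,
          smul_eq_mul, hsum]
        have h1 : tau m * a + (k - tau m) * a = k * a := by
          rw [← Nat.add_mul]; congr 1; omega
        omega
      rw [← key]
      refine AddSubmonoid.add_mem _ ?_ ?_
      · exact AddSubmonoid.sum_mem _
          (fun i _ => AddSubmonoid.subset_closure (gen_mem (c i) (hc i)))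
      · have := nsmul_mem (AddSubmonoid.subset_closure ha_mem) (k - tau m)
        simpa [smul_eq_mul] using this
  have closure_decomp : ∀ n : ℕ, n ∈ AddSubmonoid.closure S →
      n = 0 ∨ ∃ k m : ℕ, 1 ≤ k ∧ n = k * a + m ∧ (m = 0 ∨ (1 ≤ m ∧ tau m ≤ k)) := by
    intro n hn
    refine AddSubmonoid.closure_induction ?_ ?_ ?_ hn
    · intro x hx
      rcases hx with (hx | hx) | hx
      · refine Or.inr ⟨1, 0, le_refl 1, ?_, Or.inl rfl⟩
        simp at hx; omega
      · refine Or.inr ⟨1, 1, le_refl 1, ?_, Or.inr ⟨le_refl 1, ?_⟩⟩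
        · simp at hx; omega
        · rw [tau_of_P (Or.inr rfl)]
      · obtain ⟨p, hp, rfl⟩ := hx
        refine Or.inr ⟨1, p, le_refl 1, by omega, Or.inr ⟨hp.one_lt.le.trans' (by omega), ?_⟩⟩
        rw [tau_of_P (Or.inl hp)]
    · exact Or.inl rfl
    · rintro x y hx hy (rfl | ⟨k1, m1, hk1, rfl, hm1⟩) ihy
      · simpa using ihy
      · rcases ihy with rfl | ⟨k2, m2, hk2, rfl, hm2⟩
        · exact Or.inr ⟨k1, m1, hk1, by omega, hm1⟩
        · refine Or.inr ⟨k1 + k2, m1 + m2, by omega, by ring, ?_⟩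
          rcases hm1 with rfl | ⟨h1, h1'⟩
          · rcases hm2 with rfl | ⟨h2, h2'⟩
            · exact Or.inl rfl
            · exact Or.inr ⟨by omega, by simpa using h2'.trans (by omega)⟩
          · rcases hm2 with rfl | ⟨h2, h2'⟩
            · exact Or.inr ⟨by omega, by simpa using h1'.trans (by omega)⟩
            · refine Or.inr ⟨by omega, ?_⟩
              calc tau (m1 + m2) ≤ tau m1 + tau m2 := tau_add_le m1 m2 h1 h2
                _ ≤ k1 + k2 := by omega
  have t27 : tau 27 = 3 :=
    tau_eq_three_odd goldbach 27 (by norm_num) (by norm_num) (by norm_num) (by norm_num)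
  have t35 : tau 35 = 3 :=
    tau_eq_three_odd goldbach 35 (by norm_num) (by norm_num) (by norm_num) (by norm_num)
  have t51 : tau 51 = 3 :=
    tau_eq_three_odd goldbach 51 (by norm_num) (by norm_num) (by norm_num) (by norm_num)
  have t57 : tau 57 = 3 :=
    tau_eq_three_odd goldbach 57 (by norm_num) (by norm_num) (by norm_num) (by norm_num)
  have t121 : tau 121 = 3 :=
    tau_eq_three_odd goldbach 121 (by norm_num) (by norm_num) (by norm_num) (by norm_num)
  have mem_T : ∀ r : ℕ, 1 ≤ r → r ≤ a - 1 → tau r = 3 → ¬ Nat.Prime (a + r) → r ∈ T := by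
    intro r h1 h2 h3 hnp
    refine ⟨h1, h2, h3, tau_ge_two (a + r) (by omega) ?_⟩
    rintro (h | h)
    · exact hnp h
    · omega
  have hTne : T.Nonempty := by
    rcases Nat.even_or_odd a with hae | hao
    swap
    · refine ⟨27, mem_T 27 (by omega) (by omega) t27 ?_⟩
      have h2 : a % 2 = 1 := Nat.odd_iff.mp hao
      have hdvd : 2 ∣ a + 27 := by omega
      exact not_prime_of_dvd hdvd (by omega) (by omega)
    · have hae2 : a % 2 = 0 := Nat.even_iff.mp hae
      have h3 : a % 3 = 0 ∨ a % 3 = 1 ∨ a % 3 = 2 := by omega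
      rcases h3 with h3 | h3 | h3
      · refine ⟨27, mem_T 27 (by omega) (by omega) t27 ?_⟩
        have hdvd : 3 ∣ a + 27 := by omega
        exact not_prime_of_dvd hdvd (by omega) (by omega)
      · refine ⟨35, mem_T 35 (by omega) (by omega) t35 ?_⟩
        have hdvd : 3 ∣ a + 35 := by omega
        exact not_prime_of_dvd hdvd (by omega) (by omega)
      · rcases Nat.lt_or_ge a 122 with hsmall | hbig
        swap
        · refine ⟨121, mem_T 121 (by omega) (by omega) t121 ?_⟩
          have hdvd : 3 ∣ a + 121 := by omega
          exact not_prime_of_dvd hdvd (by omega) (by omega)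
        · have hcase : a = 50 ∨ a = 56 ∨ a = 62 ∨ a = 68 ∨ a = 74 ∨ a = 80 ∨ a = 86 ∨
              a = 92 ∨ a = 98 ∨ a = 104 ∨ a = 110 ∨ a = 116 := by omega
          rcases hcase with rfl|rfl|rfl|rfl|rfl|rfl|rfl|rfl|rfl|rfl|rfl|rfl
          · exact ⟨27, mem_T 27 (by omega) (by omega) t27 (by norm_num)⟩
          · exact ⟨35, mem_T 35 (by omega) (by omega) t35 (by norm_num)⟩
          · exact ⟨57, mem_T 57 (by omega) (by omega) t57 (by norm_num)⟩
          · exact ⟨27, mem_T 27 (by omega) (by omega) t27 (by norm_num)⟩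
          · exact ⟨51, mem_T 51 (by omega) (by omega) t51 (by norm_num)⟩
          · exact ⟨35, mem_T 35 (by omega) (by omega) t35 (by norm_num)⟩
          · exact ⟨35, mem_T 35 (by omega) (by omega) t35 (by norm_num)⟩
          · exact ⟨27, mem_T 27 (by omega) (by omega) t27 (by norm_num)⟩
          · exact ⟨27, mem_T 27 (by omega) (by omega) t27 (by norm_num)⟩
          · exact ⟨51, mem_T 51 (by omega) (by omega) t51 (by norm_num)⟩
          · exact ⟨35, mem_T 35 (by omega) (by omega) t35 (by norm_num)⟩
          · exact ⟨27, mem_T 27 (by omega) (by omega) t27 (by norm_num)⟩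
  have hbdd : BddAbove T := ⟨a - 1, fun r hr => hr.2.1⟩
  have hRmem : sSup T ∈ T := Nat.sSup_mem hTne hbdd
  obtain ⟨hR1, hR2, hR3, hR4⟩ := hRmem
  refine ⟨hTne, ?_, ?_⟩
  · -- 2a + sSup T is not in the closure
    intro hmem
    rcases closure_decomp _ hmem with h0 | ⟨k, m, hk, heq, hm⟩
    · omega
    · have hk2 : k ≤ 2 := by
        by_contra hk3
        have : 3 * a ≤ k * a := Nat.mul_le_mul_right a (by omega)
        omega
      have hk12 : k = 1 ∨ k = 2 := by omega
      rcases hk12 with rfl | rfl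
      · have hma : m = a + sSup T := by omega
        subst hma
        rcases hm with h | ⟨_, h⟩ <;> omega
      · have hma : m = sSup T := by omega
        subst hma
        rcases hm with h | ⟨_, h⟩ <;> omega
  · -- upper bound
    intro n hn
    simp only [Set.mem_setOf_eq] at hn
    by_contra hlt
    push_neg at hlt
    apply hn
    rcases Nat.lt_or_ge n (3 * a) with h3 | h3
    · have hrdef : n - 2 * a = n - 2 * a := rfl
      set r := n - 2 * a with hr
      have hr1 : 1 ≤ r := by omega
      have hra : r ≤ a - 1 := by omega
      have hrT : r ∉ T := fun hmem => absurd (le_csSup hbdd hmem) (by omega)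
      have hcase : ¬ (tau r = 3) ∨ tau (a + r) < 2 := by
        by_contra hc
        push_neg at hc
        exact hrT ⟨hr1, hra, hc.1, hc.2⟩
      rcases hcase with hc | hc
      · have hle3 : tau r ≤ 3 := tau_le_three goldbach r hr1
        have hne : n = 2 * a + r := by omega
        rw [hne]
        exact mem_closure_of 2 r (by omega) (Or.inr ⟨hr1, by omega⟩)
      · have hne : n = 1 * a + (a + r) := by omega
        rw [hne]
        exact mem_closure_of 1 (a + r) (by omega) (Or.inr ⟨by omega, by omega⟩)
    · rcases Nat.eq_or_lt_of_le h3 with heq | hlt3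
      · rw [← heq]
        simpa using mem_closure_of 3 0 (by omega) (Or.inl rfl)
      · have hne : n = 3 * a + (n - 3 * a) := by omega
        rw [hne]
        exact mem_closure_of 3 (n - 3 * a) (by omega)
          (Or.inr ⟨by omega, tau_le_three goldbach _ (by omega)⟩)
end

section
/- Let a > 2 and let S = {a} ∪ {a + 1} ∪ {a + p : p prime}. Then for every 1 ≤ r ≤ a−1, N_r = min over m ∈ ℕ of ( τ(ma + r)·a + (ma + r) ). -/
lemma tau_spec (n : ℕ) :
    ∃ c : Fin (tau n) → ℕ, (∀ i, Nat.Prime (c i) ∨ c i = 1) ∧ ∑ i, c i = n := by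
  have h : {s : ℕ | ∃ c : Fin s → ℕ, (∀ i, Nat.Prime (c i) ∨ c i = 1) ∧ ∑ i, c i = n}.Nonempty :=
    ⟨n, fun _ => 1, fun _ => Or.inr rfl, by simp⟩
  exact Nat.sInf_mem h

lemma tau_le_card (L : Multiset ℕ) (h : ∀ x ∈ L, Nat.Prime x ∨ x = 1) :
    tau L.sum ≤ Multiset.card L := by
  have hlen : L.toList.length = Multiset.card L := Multiset.length_toList L
  rw [← hlen, ← Multiset.sum_toList]
  apply Nat.sInf_le
  refine ⟨fun i => L.toList[i.1], fun i => ?_, ?_⟩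
  · exact h _ (Multiset.mem_toList.mp (List.getElem_mem i.isLt))
  · exact Fin.sum_univ_getElem _

theorem stmt10 (a : ℕ) (ha : 2 < a) :
    ∀ r : ℕ, 1 ≤ r → r ≤ a - 1 →
      Nr (({a} : Set ℕ) ∪ {a + 1} ∪ {n : ℕ | ∃ p : ℕ, Nat.Prime p ∧ n = a + p}) a r
        = sInf (Set.range fun m : ℕ => tau (m * a + r) * a + (m * a + r)) := by
  intro r hr1 hr2
  have hra : r < a := by omega
  set S : Set ℕ := ({a} : Set ℕ) ∪ {a + 1} ∪ {n : ℕ | ∃ p : ℕ, Nat.Prime p ∧ n = a + p}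
    with hS
  set f : ℕ → ℕ := fun m : ℕ => tau (m * a + r) * a + (m * a + r) with hf
  -- each f m is in the closure and ≡ r mod a
  have hmem : ∀ m : ℕ, f m ∈ AddSubmonoid.closure S ∧ f m % a = r := by
    intro m
    obtain ⟨c, hc, hcsum⟩ := tau_spec (m * a + r)
    constructor
    · have : f m = ∑ i : Fin (tau (m * a + r)), (a + c i) := by
        rw [Finset.sum_add_distrib, Finset.sum_const, hcsum]
        simp [hf, mul_comm]
      rw [this]
      apply AddSubmonoid.sum_mem
      intro i _
      apply AddSubmonoid.subset_closure
      rcases hc i with hp | h1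
      · exact Or.inr ⟨c i, hp, rfl⟩
      · left; right; show a + c i ∈ ({a + 1} : Set ℕ); rw [h1]; exact rfl
    · have : f m = (tau (m * a + r) + m) * a + r := by show tau (m * a + r) * a + (m * a + r) = _; ring
      rw [this]
      rw [Nat.mul_add_mod', Nat.mod_eq_of_lt hra]
  -- decomposition of closure elements
  have hdec : ∀ n ∈ AddSubmonoid.closure S, ∃ (t : ℕ) (L : Multiset ℕ),
      (∀ x ∈ L, Nat.Prime x ∨ x = 1) ∧ Multiset.card L ≤ t ∧ n = t * a + L.sum := by
    intro n hn
    induction hn using AddSubmonoid.closure_induction with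
    | mem x hx =>
      rcases hx with (hx | hx) | ⟨p, hp, hx⟩
      · exact ⟨1, 0, by simp, by simp, by simpa using hx⟩
      · exact ⟨1, {1}, by simp, by simp, by simp; simpa using hx⟩
      · exact ⟨1, {p}, by simp [hp], by simp, by simpa using hx⟩
    | zero => exact ⟨0, 0, by simp, by simp, by simp⟩
    | add x y hx hy ihx ihy =>
      obtain ⟨t1, L1, h1, hc1, rfl⟩ := ihx
      obtain ⟨t2, L2, h2, hc2, rfl⟩ := ihy
      refine ⟨t1 + t2, L1 + L2, ?_, by simpa using Nat.add_le_add hc1 hc2, by rw [Multiset.sum_add]; ring⟩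
      intro x hx
      rcases Multiset.mem_add.mp hx with h | h
      · exact h1 x h
      · exact h2 x h
  -- every element of T is ≥ sInf (range f)
  have hT : ∀ n, n ∈ AddSubmonoid.closure S → n % a = r → sInf (Set.range f) ≤ n := by
    intro n hn hmod
    obtain ⟨t, L, hL, hcard, rfl⟩ := hdec n hn
    have hmod' : L.sum % a = r := by
      rwa [Nat.mul_add_mod'] at hmod
    have hdm := Nat.div_add_mod L.sum a
    set m := L.sum / a with hm
    have hsum : L.sum = m * a + r := by rw [mul_comm]; omega
    have htau : tau (m * a + r) ≤ t := by
      rw [← hsum]; exact le_trans (tau_le_card L hL) hcard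
    calc sInf (Set.range f) ≤ f m := Nat.sInf_le ⟨m, rfl⟩
      _ = tau (m * a + r) * a + (m * a + r) := rfl
      _ ≤ t * a + L.sum := by
          rw [hsum]
          have := Nat.mul_le_mul_right a htau
          omega
  -- conclude
  unfold Nr
  apply le_antisymm
  · obtain ⟨m, hm⟩ : sInf (Set.range f) ∈ Set.range f := Nat.sInf_mem ⟨f 0, 0, rfl⟩
    exact Nat.sInf_le (hm ▸ hmem m)
  · have hne : {n : ℕ | n ∈ AddSubmonoid.closure S ∧ n % a = r}.Nonempty :=
      ⟨f 0, hmem 0⟩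
    obtain ⟨h1, h2⟩ := Nat.sInf_mem hne
    exact hT _ h1 h2
end

section
/- For every positive integer k and every M ∈ ℕ, ⌈M/k²⌉ ≤ ι_k(M) ≤ ⌊M/k²⌋ + 4. -/
/-- `iotaK k n` is the least number of squares `i²` with `1 ≤ i ≤ k` needed to write `n`
as a sum of such squares (with `iotaK k 0 = 0`). -/
noncomputable def iotaK (k n : ℕ) : ℕ :=
  sInf {s : ℕ | ∃ x : Fin k → ℕ, ∑ i, x i * (i.1 + 1) ^ 2 = n ∧ ∑ i, x i = s}

def RK (k n s : ℕ) : Prop :=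
  ∃ x : Fin k → ℕ, ∑ i, x i * (i.1 + 1) ^ 2 = n ∧ ∑ i, x i = s

lemma RK_add {k n s m t : ℕ} (h1 : RK k n s) (h2 : RK k m t) : RK k (n + m) (s + t) := by
  obtain ⟨x, hx1, hx2⟩ := h1
  obtain ⟨y, hy1, hy2⟩ := h2
  refine ⟨x + y, ?_, ?_⟩
  · simp only [Pi.add_apply, add_mul, Finset.sum_add_distrib, hx1, hy1]
  · simp only [Pi.add_apply, Finset.sum_add_distrib, hx2, hy2]

lemma RK_single (k m : ℕ) (i : Fin k) : RK k (m * (i.1 + 1) ^ 2) m :=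
  ⟨fun j => if j = i then m else 0, by simp, by simp⟩

lemma RK_sq {k : ℕ} (a : ℕ) (ha : a ≤ k) : ∃ e, e ≤ 1 ∧ RK k (a ^ 2) e := by
  rcases Nat.eq_zero_or_pos a with rfl | hpos
  · exact ⟨0, by norm_num, ⟨0, by simp, by simp⟩⟩
  · refine ⟨1, le_refl 1, ?_⟩
    have hi : a - 1 < k := by omega
    have := RK_single k 1 ⟨a - 1, hi⟩
    simpa [show a - 1 + 1 = a from by omega] using this

lemma RK_four {k r : ℕ} (hk : 0 < k) (hr : r < k ^ 2) : ∃ e, e ≤ 4 ∧ RK k r e := by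
  obtain ⟨a, b, c, d, habcd⟩ := Nat.sum_four_squares r
  have ha : a ≤ k := by nlinarith [sq_nonneg b, sq_nonneg c, sq_nonneg d]
  have hb : b ≤ k := by nlinarith [sq_nonneg a, sq_nonneg c, sq_nonneg d]
  have hc : c ≤ k := by nlinarith [sq_nonneg a, sq_nonneg b, sq_nonneg d]
  have hd : d ≤ k := by nlinarith [sq_nonneg a, sq_nonneg b, sq_nonneg c]
  obtain ⟨ea, hea, ra⟩ := RK_sq a ha
  obtain ⟨eb, heb, rb⟩ := RK_sq b hb
  obtain ⟨ec, hec, rc⟩ := RK_sq c hc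
  obtain ⟨ed, hed, rd⟩ := RK_sq d hd
  refine ⟨ea + eb + ec + ed, by omega, ?_⟩
  have := RK_add (RK_add (RK_add ra rb) rc) rd
  rwa [habcd] at this

theorem stmt11 (k : ℕ) (hk : 0 < k) (M : ℕ) :
    (M + k ^ 2 - 1) / k ^ 2 ≤ iotaK k M ∧ iotaK k M ≤ M / k ^ 2 + 4 := by
  have hk2 : 0 < k ^ 2 := by positivity
  set q := M / k ^ 2 with hq
  set r := M % k ^ 2 with hr
  have hrlt : r < k ^ 2 := Nat.mod_lt _ hk2
  obtain ⟨e, he4, hre⟩ := RK_four hk hrlt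
  have hqk : RK k (q * k ^ 2) q := by
    have := RK_single k q ⟨k - 1, by omega⟩
    simpa [show k - 1 + 1 = k from by omega] using this
  have hM : RK k M (q + e) := by
    have := RK_add hqk hre
    rwa [Nat.div_add_mod'] at this
  have hmem : q + e ∈ {s : ℕ | ∃ x : Fin k → ℕ,
      ∑ i, x i * (i.1 + 1) ^ 2 = M ∧ ∑ i, x i = s} := hM
  constructor
  · apply le_csInf ⟨q + e, hmem⟩
    rintro s ⟨x, hx1, hx2⟩
    have hle : M ≤ s * k ^ 2 := by
      calc M = ∑ i, x i * (i.1 + 1) ^ 2 := hx1.symm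
        _ ≤ ∑ i : Fin k, x i * k ^ 2 := by
            apply Finset.sum_le_sum
            intro i _
            exact Nat.mul_le_mul_left _ (Nat.pow_le_pow_left (by omega) 2)
        _ = s * k ^ 2 := by rw [← Finset.sum_mul, hx2]
    rw [Nat.div_le_iff_le_mul_add_pred hk2, Nat.mul_comm]
    omega
  · calc iotaK k M ≤ q + e := Nat.sInf_le hmem
      _ ≤ q + 4 := by omega
end

section
/- Let k be a positive integer. For every positive integer r with r ≥ (⌈3k/2⌉ − 2)·k², one has ι_k(k² + r) = ι_k(r) + 1. -/
lemma basic_rep (k a c : ℕ) (ha : 1 ≤ a) (hak : a ≤ k) :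
    ∃ x : Fin k → ℕ, ∑ i, x i * (i.1 + 1) ^ 2 = c * a ^ 2 ∧ ∑ i, x i = c := by
  refine ⟨fun i => if i = ⟨a - 1, by omega⟩ then c else 0, ?_, ?_⟩
  · rw [Finset.sum_eq_single (⟨a - 1, by omega⟩ : Fin k)]
    · simp; omega
    · intro b _ hb; simp [hb]
    · simp
  · simp [Finset.sum_ite_eq']

lemma add_rep {k n m s t : ℕ} (hx : ∃ x : Fin k → ℕ, ∑ i, x i * (i.1 + 1) ^ 2 = n ∧ ∑ i, x i = s)
    (hy : ∃ y : Fin k → ℕ, ∑ i, y i * (i.1 + 1) ^ 2 = m ∧ ∑ i, y i = t) :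
    ∃ z : Fin k → ℕ, ∑ i, z i * (i.1 + 1) ^ 2 = n + m ∧ ∑ i, z i = s + t := by
  obtain ⟨x, hx1, hx2⟩ := hx
  obtain ⟨y, hy1, hy2⟩ := hy
  exact ⟨x + y, by simp [add_mul, Finset.sum_add_distrib, hx1, hy1, hx2, hy2]⟩

lemma iotaK_le {k n s : ℕ} (h : ∃ x : Fin k → ℕ, ∑ i, x i * (i.1 + 1) ^ 2 = n ∧ ∑ i, x i = s) :
    iotaK k n ≤ s := Nat.sInf_le h

lemma iotaK_spec (k n : ℕ) (hk : 0 < k) :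
    ∃ x : Fin k → ℕ, ∑ i, x i * (i.1 + 1) ^ 2 = n ∧ ∑ i, x i = iotaK k n := by
  have hne : {s : ℕ | ∃ x : Fin k → ℕ, ∑ i, x i * (i.1 + 1) ^ 2 = n ∧ ∑ i, x i = s}.Nonempty := by
    refine ⟨n, ?_⟩
    have := basic_rep k 1 n le_rfl hk
    simpa using this
  exact Nat.sInf_mem hne

/-- a single square `a²` with `a ≤ k`, using at most one part (zero parts if `a = 0`). -/
lemma sq_rep (k a : ℕ) (hak : a ≤ k) :
    ∃ s, s ≤ 1 ∧ ∃ x : Fin k → ℕ, ∑ i, x i * (i.1 + 1) ^ 2 = a ^ 2 ∧ ∑ i, x i = s := by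
  rcases Nat.eq_zero_or_pos a with h | h
  · exact ⟨0, le_refl _ |>.trans (by norm_num), ⟨0, by simp [h], by simp⟩⟩
  · refine ⟨1, le_rfl, ?_⟩
    have := basic_rep k a 1 h hak
    simpa using this

lemma iotaK_le_four (k t : ℕ) (ht : t < k ^ 2) : iotaK k t ≤ 4 := by
  obtain ⟨a, b, c, d, h⟩ := Nat.sum_four_squares t
  have hb : ∀ z : ℕ, z ^ 2 ≤ t → z ≤ k := by
    intro z hz
    nlinarith [hz.trans_lt ht]
  obtain ⟨sa, hsa, ra⟩ := sq_rep k a (hb a (by nlinarith))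
  obtain ⟨sb, hsb, rb⟩ := sq_rep k b (hb b (by nlinarith))
  obtain ⟨sc, hsc, rc⟩ := sq_rep k c (hb c (by nlinarith))
  obtain ⟨sd, hsd, rd⟩ := sq_rep k d (hb d (by nlinarith))
  have := add_rep (add_rep (add_rep ra rb) rc) rd
  rw [h] at this
  exact (iotaK_le this).trans (by omega)

theorem stmt12 (k : ℕ) (hk : 0 < k) (r : ℕ) (hr : 0 < r)
    (hge : ((3 * k + 1) / 2 - 2) * k ^ 2 ≤ r) :
    iotaK k (k ^ 2 + r) = iotaK k r + 1 := by
  have hk2 : 0 < k ^ 2 := by positivity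
  set q : ℕ := r / k ^ 2 with hq
  -- upper bound on iotaK k r
  have hiur : iotaK k r ≤ q + 4 := by
    have h1 : ∃ x : Fin k → ℕ, ∑ i, x i * (i.1 + 1) ^ 2 = q * k ^ 2 ∧ ∑ i, x i = q :=
      basic_rep k k q hk le_rfl
    have h2 := iotaK_spec k (r % k ^ 2) hk
    have h3 := add_rep h1 h2
    have h4 : q * k ^ 2 + r % k ^ 2 = r := by
      rw [hq]; rw [mul_comm]; exact Nat.div_add_mod r (k ^ 2)
    rw [h4] at h3
    have h5 : iotaK k (r % k ^ 2) ≤ 4 := iotaK_le_four k _ (Nat.mod_lt _ hk2)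
    exact (iotaK_le h3).trans (by omega)
  -- upper direction
  have hupper : iotaK k (k ^ 2 + r) ≤ iotaK k r + 1 := by
    have h1 : ∃ x : Fin k → ℕ, ∑ i, x i * (i.1 + 1) ^ 2 = 1 * k ^ 2 ∧ ∑ i, x i = 1 :=
      basic_rep k k 1 hk le_rfl
    rw [one_mul] at h1
    have := iotaK_le (add_rep h1 (iotaK_spec k r hk))
    omega
  refine le_antisymm hupper ?_
  by_contra hcon
  push_neg at hcon
  have hm : iotaK k (k ^ 2 + r) ≤ iotaK k r := by omega
  obtain ⟨x, hx1, hx2⟩ := iotaK_spec k (k ^ 2 + r) hk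
  set K1 : Fin k := ⟨k - 1, by omega⟩ with hK1
  have hK1sq : ((K1 : Fin k).1 + 1) ^ 2 = k ^ 2 := by
    simp [hK1]; congr 1; omega
  rcases Nat.eq_zero_or_pos (x K1) with hz | hpos
  case inr =>
    -- the representation uses a k² square: remove it
    have hmem : K1 ∈ (Finset.univ : Finset (Fin k)) := Finset.mem_univ _
    set y : Fin k → ℕ := fun i => if i = K1 then x K1 - 1 else x i with hy
    have hsplitx : x K1 * ((K1 : Fin k).1 + 1) ^ 2 +
        ∑ i ∈ Finset.univ.erase K1, x i * (i.1 + 1) ^ 2 = k ^ 2 + r := by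
      rw [← hx1]; exact Finset.add_sum_erase Finset.univ (fun i : Fin k => x i * (i.1 + 1) ^ 2) hmem
    have hrep : ∃ z : Fin k → ℕ, ∑ i, z i * (i.1 + 1) ^ 2 = r ∧
        ∑ i, z i = iotaK k (k ^ 2 + r) - 1 := by
      refine ⟨y, ?_, ?_⟩
      · have hy0 : ∑ i, y i * (i.1 + 1) ^ 2 = y K1 * ((K1 : Fin k).1 + 1) ^ 2 +
            ∑ i ∈ Finset.univ.erase K1, y i * (i.1 + 1) ^ 2 :=
          (Finset.add_sum_erase Finset.univ (fun i : Fin k => y i * (i.1 + 1) ^ 2) hmem).symm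
        rw [hy0]
        have he : ∑ i ∈ Finset.univ.erase K1, y i * (i.1 + 1) ^ 2
            = ∑ i ∈ Finset.univ.erase K1, x i * (i.1 + 1) ^ 2 := by
          refine Finset.sum_congr rfl fun i hi => ?_
          rw [hy]; simp [Finset.ne_of_mem_erase hi]
        rw [he]
        have hyk : y K1 = x K1 - 1 := by simp [hy]
        rw [hyk, hK1sq, Nat.sub_mul, one_mul]
        rw [hK1sq] at hsplitx
        have : k ^ 2 ≤ x K1 * k ^ 2 := Nat.le_mul_of_pos_left _ hpos
        omega
      · have hy0 : ∑ i, y i = y K1 + ∑ i ∈ Finset.univ.erase K1, y i :=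
          (Finset.add_sum_erase Finset.univ (fun i : Fin k => y i) hmem).symm
        have hx0 : x K1 + ∑ i ∈ Finset.univ.erase K1, x i = iotaK k (k ^ 2 + r) := by
          rw [← hx2]; exact Finset.add_sum_erase Finset.univ (fun i : Fin k => x i) hmem
        rw [hy0]
        have he : ∑ i ∈ Finset.univ.erase K1, y i = ∑ i ∈ Finset.univ.erase K1, x i := by
          refine Finset.sum_congr rfl fun i hi => ?_
          rw [hy]; simp [Finset.ne_of_mem_erase hi]
        have hyk : y K1 = x K1 - 1 := by simp [hy]
        rw [he, hyk]
        omega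
    obtain ⟨z, hz1, hz2⟩ := hrep
    have hle := iotaK_le ⟨z, hz1, hz2⟩
    have hm1 : 1 ≤ iotaK k (k ^ 2 + r) := by
      rw [← hx2]
      exact hpos.trans_le (Finset.single_le_sum (fun i _ => Nat.zero_le _) hmem)
    omega
  case inl =>
    -- no k² square used: all parts ≤ (k-1)², counting contradiction
    have hbound : k ^ 2 + r ≤ iotaK k (k ^ 2 + r) * (k - 1) ^ 2 := by
      have h1 : ∑ i, x i * (i.1 + 1) ^ 2 ≤ ∑ i, x i * (k - 1) ^ 2 := by
        refine Finset.sum_le_sum fun i _ => ?_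
        rcases eq_or_ne i K1 with h | h
        · rw [h, hz]; simp
        · refine Nat.mul_le_mul_left _ (Nat.pow_le_pow_left ?_ 2)
          have : i.1 ≠ k - 1 := fun hh => h (by rw [hK1]; exact Fin.ext hh)
          have := i.2
          omega
      rw [← Finset.sum_mul, hx2, hx1] at h1
      exact h1
    have hqge : (3 * k + 1) / 2 - 2 ≤ q := (Nat.le_div_iff_mul_le hk2).2 hge
    have hqr : q * k ^ 2 ≤ r := Nat.div_mul_le_self r (k ^ 2)
    -- set j = k - 1
    set j : ℕ := k - 1 with hj
    have hkj : k = j + 1 := by omega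
    have h2q : 3 * j ≤ 2 * q + 1 := by omega
    have hfin : (q + 1) * (j + 1) ^ 2 ≤ (q + 4) * j ^ 2 := by
      calc (q + 1) * (j + 1) ^ 2 = k ^ 2 + q * k ^ 2 := by rw [hkj]; ring
        _ ≤ k ^ 2 + r := by omega
        _ ≤ iotaK k (k ^ 2 + r) * (k - 1) ^ 2 := hbound
        _ ≤ (q + 4) * j ^ 2 := by
            refine Nat.mul_le_mul_right _ ?_
            omega
    nlinarith [Nat.mul_le_mul_right j h2q, hfin]
end

section
/- Let k be a positive integer, let r ∈ ℕ, and let (x_1, …, x_k) ∈ ℕ^k be an optimal representation, i.e., Σ_{i=1}^k x_i·i² = r and Σ_{i=1}^k x_i = ι_k(r). Then x_i ≤ 3 for every 1 ≤ i ≤ ⌊k/2⌋, and x_i ≤ ⌊4k² / (k² − i²)⌋ for every i with ⌊k/2⌋ < i ≤ k − 1. -/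
lemma sum_update_mul {k : ℕ} (f g : Fin k → ℕ) (i : Fin k) (c : ℕ) :
    (∑ t, Function.update f i c t * g t) + f i * g i = (∑ t, f t * g t) + c * g i := by
  have h1 : (fun t => Function.update f i c t * g t)
      = Function.update (fun t => f t * g t) i (c * g i) := by
    funext t
    rcases eq_or_ne t i with rfl | h
    · simp
    · simp [Function.update_of_ne h]
  rw [h1, Finset.sum_update_of_mem (Finset.mem_univ i),
    ← Finset.add_sum_erase _ _ (Finset.mem_univ i), Finset.erase_eq]
  ring

lemma sum_addM {k : ℕ} (f g : Fin k → ℕ) (j : Fin k) (m : ℕ) :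
    (∑ t, Function.update f j (f j + m) t * g t) = (∑ t, f t * g t) + m * g j := by
  have h := sum_update_mul f g j (f j + m)
  have h2 : (f j + m) * g j = f j * g j + m * g j := add_mul _ _ _
  rw [h2] at h
  linarith

lemma addSq_spec {k : ℕ} (f : Fin k → ℕ) (t : ℕ) (htk : t - 1 < k) :
    (∑ s, Function.update f ⟨t-1, htk⟩ (f ⟨t-1,htk⟩ + (if t = 0 then 0 else 1)) s * (s.1+1)^2)
      = (∑ s, f s * (s.1+1)^2) + t^2 ∧
    (∑ s, Function.update f ⟨t-1, htk⟩ (f ⟨t-1,htk⟩ + (if t = 0 then 0 else 1)) s)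
      ≤ (∑ s, f s) + 1 := by
  constructor
  · rw [sum_addM]
    congr 1
    rcases Nat.eq_zero_or_pos t with rfl | hpos
    · simp
    · rw [if_neg (by omega), one_mul]
      congr 2
      simp
      omega
  · have h := sum_addM f (fun _ => 1) ⟨t-1, htk⟩ (if t = 0 then 0 else 1)
    simp only [mul_one] at h
    rw [h]
    split <;> omega

theorem stmt13 (k : ℕ) (hk : 0 < k) (r : ℕ) (x : Fin k → ℕ)
    (hrep : ∑ i, x i * (i.1 + 1) ^ 2 = r) (hopt : ∑ i, x i = iotaK k r) :
    ∀ i : Fin k,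
      (i.1 + 1 ≤ k / 2 → x i ≤ 3) ∧
      (k / 2 < i.1 + 1 → i.1 + 1 ≤ k - 1 →
        x i ≤ 4 * k ^ 2 / (k ^ 2 - (i.1 + 1) ^ 2)) := by
  intro i
  have hlei : ∀ y : Fin k → ℕ, (∑ t, y t * (t.1+1)^2) = r → iotaK k r ≤ ∑ t, y t := by
    intro y hy
    apply Nat.sInf_le
    exact ⟨y, hy, rfl⟩
  constructor
  · -- small case : x i ≤ 3
    intro hv
    by_contra hgt
    push_neg at hgt  -- 3 < x i
    have hj : 2 * i.1 + 1 < k := by omega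
    have h1 := sum_update_mul x (fun t => (t.1+1)^2) i (x i - 4)
    have h1c := sum_update_mul x (fun _ => 1) i (x i - 4)
    simp only [mul_one] at h1c
    set f0 : Fin k → ℕ := Function.update x i (x i - 4) with hf0
    have h2 := sum_addM f0 (fun t => (t.1+1)^2) ⟨2*i.1+1, hj⟩ 1
    have h2c := sum_addM f0 (fun _ => 1) ⟨2*i.1+1, hj⟩ 1
    simp only [mul_one] at h2c
    set f1 : Fin k → ℕ := Function.update f0 ⟨2*i.1+1, hj⟩ (f0 ⟨2*i.1+1, hj⟩ + 1) with hf1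
    have hsplit : x i * (i.1+1)^2 = (x i - 4) * (i.1+1)^2 + 4 * (i.1+1)^2 := by
      rw [← add_mul]; congr 1; omega
    have hwj : (1 : ℕ) * ((⟨2*i.1+1, hj⟩ : Fin k).1 + 1)^2 = 4 * (i.1+1)^2 := by
      simp only [Fin.val_mk]; ring
    rw [hwj] at h2
    rw [hrep, hsplit] at h1
    have hyw : (∑ t, f1 t * (t.1+1)^2) = r := by linarith
    have hle := hlei f1 hyw
    omega
  · -- large case
    intro hv1 hv2
    by_contra hgt
    push_neg at hgt  -- 4k²/(k²-v²) < x i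
    have hvk : i.1 + 1 < k := by omega
    have hd : 0 < k^2 - (i.1+1)^2 := by
      have h := Nat.pow_lt_pow_left hvk (n := 2) (by norm_num)
      omega
    have had : 4 * k^2 < x i * (k^2 - (i.1+1)^2) :=
      (Nat.div_lt_iff_lt_mul hd).1 hgt
    have hk2 : 0 < k^2 := by positivity
    set b := x i * (i.1+1)^2 / k^2 with hb
    set ρ := x i * (i.1+1)^2 % k^2 with hρ
    have hbρ : k^2 * b + ρ = x i * (i.1+1)^2 := Nat.div_add_mod _ _
    have hρlt : ρ < k^2 := Nat.mod_lt _ hk2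
    have hsum : x i * (i.1+1)^2 + x i * (k^2 - (i.1+1)^2) = x i * k^2 := by
      rw [← mul_add]; congr 1; omega
    have hblt : b + 4 < x i := by
      have h5 : (b+4) * k^2 < x i * k^2 := by nlinarith [hbρ, had, hsum]
      exact lt_of_mul_lt_mul_right h5 (Nat.zero_le _)
    obtain ⟨A, B, C, D, hq⟩ := Nat.sum_four_squares ρ
    have sqlt : ∀ a : ℕ, a^2 ≤ ρ → a - 1 < k := by
      intro a h
      have h6 : a^2 < k^2 := by omega
      have h7 : a < k := by
        by_contra h8
        push_neg at h8
        exact absurd (Nat.pow_le_pow_left h8 2) (by omega)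
      omega
    have hA1 : A - 1 < k := sqlt A (by omega)
    have hB1 : B - 1 < k := sqlt B (by omega)
    have hC1 : C - 1 < k := sqlt C (by omega)
    have hD1 : D - 1 < k := sqlt D (by omega)
    have hkk : k - 1 < k := by omega
    -- build the new representation
    have h1 := sum_update_mul x (fun t => (t.1+1)^2) i 0
    have h1c := sum_update_mul x (fun _ => 1) i 0
    simp only [mul_one, zero_mul, add_zero] at h1 h1c
    rw [hrep] at h1
    set f0 : Fin k → ℕ := Function.update x i 0 with hf0
    have h2 := sum_addM f0 (fun t => (t.1+1)^2) ⟨k-1, hkk⟩ b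
    have h2c := sum_addM f0 (fun _ => 1) ⟨k-1, hkk⟩ b
    simp only [mul_one] at h2c
    have hwk : b * ((⟨k-1, hkk⟩ : Fin k).1 + 1)^2 = b * k^2 := by
      simp only [Fin.val_mk]
      congr 2
      omega
    rw [hwk] at h2
    set f1 : Fin k → ℕ := Function.update f0 ⟨k-1, hkk⟩ (f0 ⟨k-1, hkk⟩ + b) with hf1
    obtain ⟨h3, h3c⟩ := addSq_spec f1 A hA1
    set f2 : Fin k → ℕ := Function.update f1 ⟨A-1, hA1⟩ (f1 ⟨A-1, hA1⟩ + if A = 0 then 0 else 1) with hf2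
    obtain ⟨h4, h4c⟩ := addSq_spec f2 B hB1
    set f3 : Fin k → ℕ := Function.update f2 ⟨B-1, hB1⟩ (f2 ⟨B-1, hB1⟩ + if B = 0 then 0 else 1) with hf3
    obtain ⟨h5, h5c⟩ := addSq_spec f3 C hC1
    set f4 : Fin k → ℕ := Function.update f3 ⟨C-1, hC1⟩ (f3 ⟨C-1, hC1⟩ + if C = 0 then 0 else 1) with hf4
    obtain ⟨h6, h6c⟩ := addSq_spec f4 D hD1
    set f5 : Fin k → ℕ := Function.update f4 ⟨D-1, hD1⟩ (f4 ⟨D-1, hD1⟩ + if D = 0 then 0 else 1) with hf5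
    have hyw : (∑ t, f5 t * (t.1+1)^2) = r := by linarith
    have hle := hlei f5 hyw
    omega
end

section
/- Let k ≥ 2 be an integer, set u = (⌈3k/2⌉ + 1)·k², let a ≥ u, and let S = {a} ∪ {a + i² : 1 ≤ i ≤ k}. Then max over 0 ≤ r ≤ a−1 of N_r equals max over a − k² ≤ r ≤ a−1 of N_r. -/
section aux

lemma gen_mem_a (a k : ℕ) : a ∈ AddSubmonoid.closure
    (({a} : Set ℕ) ∪ {n : ℕ | ∃ i, 1 ≤ i ∧ i ≤ k ∧ n = a + i ^ 2}) :=
  AddSubmonoid.subset_closure (Set.mem_union_left _ rfl)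

lemma gen_mem_sq (a k i : ℕ) (h1 : 1 ≤ i) (h2 : i ≤ k) : a + i ^ 2 ∈ AddSubmonoid.closure
    (({a} : Set ℕ) ∪ {n : ℕ | ∃ i, 1 ≤ i ∧ i ≤ k ∧ n = a + i ^ 2}) :=
  AddSubmonoid.subset_closure (Set.mem_union_right _ ⟨i, h1, h2, rfl⟩)

lemma gen_mem_sq' (a k x : ℕ) (hx : x ≤ k) : a + x ^ 2 ∈ AddSubmonoid.closure
    (({a} : Set ℕ) ∪ {n : ℕ | ∃ i, 1 ≤ i ∧ i ≤ k ∧ n = a + i ^ 2}) := by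
  rcases Nat.eq_zero_or_pos x with rfl | hx0
  · simpa using gen_mem_a a k
  · exact gen_mem_sq a k x hx0 hx

lemma closure_decomp (a k : ℕ) (n : ℕ)
    (hn : n ∈ AddSubmonoid.closure (({a} : Set ℕ) ∪ {n : ℕ | ∃ i, 1 ≤ i ∧ i ≤ k ∧ n = a + i ^ 2})) :
    ∃ c p Q : ℕ, p ≤ c ∧ n = c * a + p * k ^ 2 + Q ∧ Q ≤ (c - p) * (k - 1) ^ 2 ∧
      (c - p) * a + Q ∈ AddSubmonoid.closure
        (({a} : Set ℕ) ∪ {n : ℕ | ∃ i, 1 ≤ i ∧ i ≤ k ∧ n = a + i ^ 2}) := by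
  induction hn using AddSubmonoid.closure_induction with
  | mem x hx =>
      rcases hx with hx | ⟨i, hi1, hik, rfl⟩
      · have hxa : x = a := hx
        exact ⟨1, 0, 0, by omega, by rw [hxa]; ring, by simp, by simpa using gen_mem_a a k⟩
      · rcases eq_or_lt_of_le hik with rfl | hlt
        · exact ⟨1, 1, 0, le_refl _, by ring, by simp, by simpa using AddSubmonoid.zero_mem _⟩
        · refine ⟨1, 0, i ^ 2, by omega, by ring, ?_, ?_⟩
          · simpa using Nat.pow_le_pow_left (by omega) 2
          · simpa using gen_mem_sq a k i hi1 hik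
  | zero => exact ⟨0, 0, 0, le_refl _, by simp, by simp, by simpa using AddSubmonoid.zero_mem _⟩
  | add x y hx hy ihx ihy =>
      obtain ⟨c1, p1, Q1, hpc1, he1, hQ1, hm1⟩ := ihx
      obtain ⟨c2, p2, Q2, hpc2, he2, hQ2, hm2⟩ := ihy
      refine ⟨c1 + c2, p1 + p2, Q1 + Q2, by omega, by rw [he1, he2]; ring, ?_, ?_⟩
      · have h : (c1 + c2) - (p1 + p2) = (c1 - p1) + (c2 - p2) := by omega
        rw [h, add_mul]; exact add_le_add hQ1 hQ2
      · have h : ((c1 + c2) - (p1 + p2)) * a + (Q1 + Q2)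
            = ((c1 - p1) * a + Q1) + ((c2 - p2) * a + Q2) := by
          have h2 : (c1 + c2) - (p1 + p2) = (c1 - p1) + (c2 - p2) := by omega
          rw [h2]; ring
        rw [h]; exact AddSubmonoid.add_mem _ hm1 hm2

lemma masterZ (k t q s : ℤ) (hk : 2 ≤ k) (ht : 1 ≤ t) (hq : 0 ≤ q) (hs : 0 ≤ s)
    (h : 3 * k ≤ 2 * (q + t)) :
    (t - 1) * (2 * k - 1) + 4 * (k - 1) ^ 2 ≤ q * (2 * k - 1) + s + t * k ^ 2 := by
  have hkey : (0:ℤ) ≤ (2 * q + 2 * t - 3 * k) * (2 * k - 1) :=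
    mul_nonneg (by linarith) (by linarith)
  rcases le_or_gt 4 t with h4 | h4
  · nlinarith [mul_nonneg (by linarith : (0:ℤ) ≤ t - 4) (sq_nonneg (k-1)),
      mul_nonneg hq (by linarith : (0:ℤ) ≤ 2*k-1)]
  · interval_cases t <;> nlinarith [hkey, sq_nonneg (k-1), hk]

lemma count_bound (k q s t p u Q : ℕ) (hk : 2 ≤ k) (hpt : p + 1 ≤ t)
    (hQle : Q ≤ u * (k - 1) ^ 2) (hQge : q * k ^ 2 + s + t * k ^ 2 ≤ p * k ^ 2 + Q)
    (h3 : 3 * k ≤ 2 * (q + t)) : q + 4 ≤ p + u := by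
  have hm := masterZ (k : ℤ) t q s (by exact_mod_cast hk) (by exact_mod_cast (by omega : 1 ≤ t))
    (by positivity) (by positivity) (by exact_mod_cast h3)
  have h1 : (Q : ℤ) ≤ (u : ℤ) * ((k : ℤ) - 1) ^ 2 := by
    have := hQle
    zify [show 1 ≤ k by omega] at this
    exact this
  have h2 : (q : ℤ) * (k : ℤ) ^ 2 + s + t * (k : ℤ) ^ 2 ≤ (p : ℤ) * (k : ℤ) ^ 2 + Q := by
    exact_mod_cast hQge
  have h3' : (p : ℤ) * (2 * (k : ℤ) - 1) ≤ ((t : ℤ) - 1) * (2 * (k : ℤ) - 1) := by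
    apply mul_le_mul_of_nonneg_right
    · have : (p : ℤ) + 1 ≤ t := by exact_mod_cast hpt
      linarith
    · have : (2 : ℤ) ≤ k := by exact_mod_cast hk
      linarith
  have hZ : ((q : ℤ) + 4) * ((k : ℤ) - 1) ^ 2 ≤ ((p : ℤ) + u) * ((k : ℤ) - 1) ^ 2 := by
    nlinarith [hm, h1, h2, h3']
  have hpos : (0 : ℤ) < ((k : ℤ) - 1) ^ 2 := by
    have h2k : (2 : ℤ) ≤ k := by exact_mod_cast hk
    have : (0:ℤ) < (k:ℤ) - 1 := by linarith
    exact pow_pos this 2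
  have := le_of_mul_le_mul_right hZ hpos
  exact_mod_cast this

lemma exists_t (c d : ℕ) (hd : 0 < d) : ∃ t : ℕ, t * d ≤ c ∧ c < t * d + d := by
  obtain ⟨D, M, h1, h2⟩ : ∃ D M, d * D + M = c ∧ M < d :=
    ⟨c / d, c % d, Nat.div_add_mod c d, Nat.mod_lt c hd⟩
  exact ⟨D, by linarith [h1, h2, Nat.mul_comm d D], by linarith [h1, h2, Nat.mul_comm d D]⟩

lemma h3k_aux (k a r t q' s : ℕ) (hk : 2 ≤ k) (ha : ((3 * k + 1) / 2 + 1) * k ^ 2 ≤ a)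
    (hrt2 : a ≤ r + t * k ^ 2 + k ^ 2) (hqs : k ^ 2 * q' + s = r) (hs : s < k ^ 2) :
    3 * k ≤ 2 * (q' + t) := by
  have hW : ((3 * k + 1) / 2 + 1) * k ^ 2 < (q' + t + 2) * k ^ 2 := by nlinarith
  have hW2 : (3 * k + 1) / 2 + 1 < q' + t + 2 := lt_of_mul_lt_mul_right hW (Nat.zero_le _)
  omega

lemma key_step (k a r t : ℕ) (hk : 2 ≤ k) (ha : ((3 * k + 1) / 2 + 1) * k ^ 2 ≤ a)
    (hr : r < a) (ht : 1 ≤ t) (hrt : r + t * k ^ 2 ≤ a - 1) (hrt2 : a ≤ r + t * k ^ 2 + k ^ 2) :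
    Nr (({a} : Set ℕ) ∪ {n : ℕ | ∃ i : ℕ, 1 ≤ i ∧ i ≤ k ∧ n = a + i ^ 2}) a r
      ≤ Nr (({a} : Set ℕ) ∪ {n : ℕ | ∃ i : ℕ, 1 ≤ i ∧ i ≤ k ∧ n = a + i ^ 2}) a (r + t * k ^ 2) := by
  set S := (({a} : Set ℕ) ∪ {n : ℕ | ∃ i : ℕ, 1 ≤ i ∧ i ≤ k ∧ n = a + i ^ 2}) with hS
  set r' := r + t * k ^ 2 with hr'def
  have hk2 : 4 ≤ k ^ 2 := by nlinarith
  have ha0 : 0 < a := lt_of_lt_of_le (Nat.mul_pos (by omega) (pow_pos (by omega) 2)) ha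
  have hr'a : r' < a := lt_of_le_of_lt hrt (Nat.sub_lt ha0 one_pos)
  -- the defining set for r' is nonempty
  have hone : a + 1 ∈ AddSubmonoid.closure S := by
    simpa only [one_pow] using gen_mem_sq a k 1 le_rfl (by omega)
  have hcl : r' * (a + 1) ∈ AddSubmonoid.closure S := by
    have h : r' * (a + 1) = r' • (a + 1) := (nsmul_eq_mul _ _).symm
    rw [h]
    exact AddSubmonoid.nsmul_mem _ hone _
  have hmod : (r' * (a + 1)) % a = r' := by
    have h1 : r' * (a + 1) = r' + r' * a := by ring
    rw [h1, Nat.add_mul_mod_self_right, Nat.mod_eq_of_lt hr'a]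
  have hne : {n : ℕ | n ∈ AddSubmonoid.closure S ∧ n % a = r'}.Nonempty := ⟨_, hcl, hmod⟩
  have hn : Nr S a r' ∈ {n : ℕ | n ∈ AddSubmonoid.closure S ∧ n % a = r'} := Nat.sInf_mem hne
  set n := Nr S a r' with hndef
  obtain ⟨c, p, Q, hpc, heq, hQle, hm⟩ := closure_decomp a k n hn.1
  have hmodn : n % a = r' := hn.2
  rcases le_or_gt t p with hcase | hcase
  · -- enough copies of a + k^2 : subtract t of them
    obtain ⟨v, hv⟩ : ∃ v, p = t + v := ⟨p - t, by omega⟩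
    obtain ⟨u, hu⟩ : ∃ u, c = p + u := ⟨c - p, by omega⟩
    set w := u * a + Q + v * (a + k ^ 2) with hwdef
    have hmw : w ∈ AddSubmonoid.closure S := by
      have h1 : (c - p) * a + Q ∈ AddSubmonoid.closure S := hm
      have h2 : c - p = u := by omega
      rw [h2] at h1
      have h3 : v * (a + k ^ 2) ∈ AddSubmonoid.closure S := by
        have h4 : v * (a + k ^ 2) = v • (a + k ^ 2) := (nsmul_eq_mul _ _).symm
        rw [h4]
        exact AddSubmonoid.nsmul_mem _ (gen_mem_sq a k k (by omega) le_rfl) _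
      exact AddSubmonoid.add_mem _ h1 h3
    have hwn : n = w + t * k ^ 2 + t * a := by
      rw [heq, hu, hv, hwdef]; ring
    have hwmod : w % a = r := by
      have h1 : (w + t * k ^ 2) % a = n % a := by
        rw [hwn, Nat.add_mul_mod_self_right]
      have h2 : (w + t * k ^ 2) % a = (r + t * k ^ 2) % a := by
        rw [h1, hmodn, Nat.mod_eq_of_lt hr'a]
      have h3 : w ≡ r [MOD a] := Nat.ModEq.add_right_cancel' (t * k ^ 2) h2
      have h4 : w % a = r % a := h3
      rwa [Nat.mod_eq_of_lt hr] at h4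
    have hwle : w ≤ n := by
      rw [hwn]
      exact le_trans (Nat.le_add_right _ (t * k ^ 2)) (Nat.le_add_right _ (t * a))
    calc Nr S a r ≤ w := Nat.sInf_le ⟨hmw, hwmod⟩
      _ ≤ n := hwle
  · -- few copies of a + k^2 : use a direct small representative of r
    obtain ⟨q', s, hqs, hs⟩ : ∃ q' s, k ^ 2 * q' + s = r ∧ s < k ^ 2 :=
      ⟨r / k ^ 2, r % k ^ 2, Nat.div_add_mod r (k ^ 2), Nat.mod_lt r (by omega)⟩
    obtain ⟨x1, x2, x3, x4, hx⟩ := Nat.sum_four_squares s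
    have hxle : ∀ x : ℕ, x ^ 2 ≤ s → x ≤ k := by
      intro x hxs
      by_contra hcon
      push_neg at hcon
      have h5 : k ^ 2 < x ^ 2 := Nat.pow_lt_pow_left hcon (by omega)
      omega
    have hx1 : x1 ≤ k := hxle x1 (by linarith [Nat.zero_le (x2 ^ 2), Nat.zero_le (x3 ^ 2), Nat.zero_le (x4 ^ 2)])
    have hx2 : x2 ≤ k := hxle x2 (by linarith [Nat.zero_le (x1 ^ 2), Nat.zero_le (x3 ^ 2), Nat.zero_le (x4 ^ 2)])
    have hx3 : x3 ≤ k := hxle x3 (by linarith [Nat.zero_le (x1 ^ 2), Nat.zero_le (x2 ^ 2), Nat.zero_le (x4 ^ 2)])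
    have hx4 : x4 ≤ k := hxle x4 (by linarith [Nat.zero_le (x1 ^ 2), Nat.zero_le (x2 ^ 2), Nat.zero_le (x3 ^ 2)])
    set w := q' * (a + k ^ 2) + ((a + x1 ^ 2) + (a + x2 ^ 2) + (a + x3 ^ 2) + (a + x4 ^ 2))
      with hwdef
    have hmw : w ∈ AddSubmonoid.closure S := by
      have h1 : q' * (a + k ^ 2) ∈ AddSubmonoid.closure S := by
        have h4 : q' * (a + k ^ 2) = q' • (a + k ^ 2) := (nsmul_eq_mul _ _).symm
        rw [h4]
        exact AddSubmonoid.nsmul_mem _ (gen_mem_sq a k k (by omega) le_rfl) _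
      exact AddSubmonoid.add_mem _ h1 (AddSubmonoid.add_mem _ (AddSubmonoid.add_mem _
        (AddSubmonoid.add_mem _ (gen_mem_sq' a k x1 hx1) (gen_mem_sq' a k x2 hx2))
        (gen_mem_sq' a k x3 hx3)) (gen_mem_sq' a k x4 hx4))
    have hweq : w = (q' + 4) * a + r := by
      have h1 : w = (q' + 4) * a + (k ^ 2 * q' + (x1 ^ 2 + x2 ^ 2 + x3 ^ 2 + x4 ^ 2)) := by
        rw [hwdef]; ring
      rw [h1, hx, hqs]
    have hwmod : w % a = r := by
      rw [hweq, Nat.add_comm, Nat.add_mul_mod_self_right, Nat.mod_eq_of_lt hr]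
    -- now show w ≤ n
    have hRmod : (p * k ^ 2 + Q) % a = r' := by
      have h0 : n = a * c + (p * k ^ 2 + Q) := by rw [heq]; ring
      have h1 : n % a = (p * k ^ 2 + Q) % a := by rw [h0, Nat.mul_add_mod]
      rw [← h1, hmodn]
    have hRge : r' ≤ p * k ^ 2 + Q := hRmod ▸ Nat.mod_le _ _
    have h3k : 3 * k ≤ 2 * (q' + t) := h3k_aux k a r t q' s hk ha hrt2 hqs hs
    have hQge : q' * k ^ 2 + s + t * k ^ 2 ≤ p * k ^ 2 + Q := by
      have h1 : r + t * k ^ 2 ≤ p * k ^ 2 + Q := hRge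
      rw [← hqs] at h1
      linarith
    have hcount : q' + 4 ≤ c := by
      have h2 := count_bound k q' s t p (c - p) Q hk (by omega) hQle hQge h3k
      omega
    have hwle : w ≤ n := by
      rw [hweq, heq]
      have h1 : (q' + 4) * a ≤ c * a := Nat.mul_le_mul_right a hcount
      have h2 : r ≤ p * k ^ 2 + Q := le_trans (Nat.le_add_right r (t * k ^ 2)) hRge
      linarith
    calc Nr S a r ≤ w := Nat.sInf_le ⟨hmw, hwmod⟩
      _ ≤ n := hwle

end aux

theorem stmt15 (k : ℕ) (hk : 2 ≤ k) (a : ℕ) (ha : ((3 * k + 1) / 2 + 1) * k ^ 2 ≤ a) :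
    (Finset.range a).sup
        (fun r => Nr (({a} : Set ℕ) ∪ {n : ℕ | ∃ i : ℕ, 1 ≤ i ∧ i ≤ k ∧ n = a + i ^ 2}) a r)
      = (Finset.Icc (a - k ^ 2) (a - 1)).sup
        (fun r => Nr (({a} : Set ℕ) ∪ {n : ℕ | ∃ i : ℕ, 1 ≤ i ∧ i ≤ k ∧ n = a + i ^ 2}) a r) := by
  have hk2 : 4 ≤ k ^ 2 := by nlinarith
  apply le_antisymm
  · apply Finset.sup_le
    intro r hrmem
    have hr : r < a := Finset.mem_range.mp hrmem
    obtain ⟨t, h1, h2⟩ := exists_t (a - 1 - r) (k ^ 2) (by omega)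
    have hrt : r + t * k ^ 2 ≤ a - 1 := by
      have h3 : r + t * k ^ 2 ≤ r + (a - 1 - r) := Nat.add_le_add_left h1 r
      omega
    have hrt2 : a ≤ r + t * k ^ 2 + k ^ 2 := by
      rcases le_or_gt a (r + t * k ^ 2 + k ^ 2) with h | h
      · exact h
      · exfalso
        have h4 : r + (a - 1 - r) < r + (t * k ^ 2 + k ^ 2) := Nat.add_lt_add_left h2 r
        omega
    have hmem' : r + t * k ^ 2 ∈ Finset.Icc (a - k ^ 2) (a - 1) := by
      rw [Finset.mem_Icc]
      constructor
      · omega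
      · exact hrt
    rcases Nat.eq_zero_or_pos t with ht0 | ht1
    · have h5 : r + t * k ^ 2 = r := by rw [ht0]; ring
      rw [← h5]
      exact Finset.le_sup hmem'
    · exact le_trans (key_step k a r t hk ha hr ht1 hrt hrt2) (Finset.le_sup hmem')
  · apply Finset.sup_le
    intro r hrmem
    rw [Finset.mem_Icc] at hrmem
    have ha0 : 0 < a := lt_of_lt_of_le (Nat.mul_pos (by omega) (pow_pos (by omega) 2)) ha
    have hra : r < a := by omega
    exact Finset.le_sup (Finset.mem_range.mpr hra)
end

section
/- For every integer a ≥ 2, the Frobenius number of the set {a, a+1, a+4} equals 5a + 15 + (a+4)·(⌊a/4⌋ − 4) if a mod 4 ∈ {0, 1, 2}, and equals 5a + 18 + (a+4)·(⌊a/4⌋ − 4) if a ≡ 3 (mod 4). (The equalities are of integers; the stated expressions are nonnegative.) -/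
theorem stmt17 (a : ℕ) (ha : 2 ≤ a) :
    ∃ g : ℕ,
      IsGreatest {n : ℕ | n ∉ AddSubmonoid.closure ({a, a + 1, a + 4} : Set ℕ)} g ∧
      ((a % 4 = 0 ∨ a % 4 = 1 ∨ a % 4 = 2) →
        (g : ℤ) = 5 * (a : ℤ) + 15 + ((a : ℤ) + 4) * (((a / 4 : ℕ) : ℤ) - 4)) ∧
      (a % 4 = 3 →
        (g : ℤ) = 5 * (a : ℤ) + 18 + ((a : ℤ) + 4) * (((a / 4 : ℕ) : ℤ) - 4)) := by
  set q := a / 4 with hqdef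
  set r := a % 4 with hrdef
  have har : a = 4 * q + r := by omega
  have hr4 : r < 4 := by omega
  set c : ℕ := if r = 3 then 1 else r + 1 with hcdef
  have hc : (r = 3 ∧ c = 1) ∨ (r ≠ 3 ∧ c = r + 1) := by
    by_cases h : r = 3 <;> simp [hcdef, h]
  have hmul : 2 * a ≤ (q + 2) * a := Nat.mul_le_mul_right a (by omega)
  have hgc : c ≤ (q + 2) * a := by omega
  have memc : ∀ x y z : ℕ, x * a + y * (a + 1) + z * (a + 4) ∈
      AddSubmonoid.closure ({a, a + 1, a + 4} : Set ℕ) := by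
    intro x y z
    have h1 : a ∈ AddSubmonoid.closure ({a, a + 1, a + 4} : Set ℕ) :=
      AddSubmonoid.subset_closure (by simp)
    have h2 : a + 1 ∈ AddSubmonoid.closure ({a, a + 1, a + 4} : Set ℕ) :=
      AddSubmonoid.subset_closure (by simp)
    have h3 : a + 4 ∈ AddSubmonoid.closure ({a, a + 1, a + 4} : Set ℕ) :=
      AddSubmonoid.subset_closure (by simp)
    simpa [smul_eq_mul] using
      add_mem (add_mem (AddSubmonoid.nsmul_mem _ h1 x) (AddSubmonoid.nsmul_mem _ h2 y))
        (AddSubmonoid.nsmul_mem _ h3 z)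
  have decomp : ∀ n : ℕ, n ∈ AddSubmonoid.closure ({a, a + 1, a + 4} : Set ℕ) →
      ∃ x y z : ℕ, n = x * a + y * (a + 1) + z * (a + 4) := by
    intro n hn
    induction hn using AddSubmonoid.closure_induction with
    | mem w hw =>
      simp only [Set.mem_insert_iff, Set.mem_singleton_iff] at hw
      rcases hw with rfl | rfl | rfl
      exacts [⟨1, 0, 0, by ring⟩, ⟨0, 1, 0, by ring⟩, ⟨0, 0, 1, by ring⟩]
    | zero => exact ⟨0, 0, 0, by ring⟩
    | add u v hu hv ihu ihv =>
      obtain ⟨x1, y1, z1, h1⟩ := ihu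
      obtain ⟨x2, y2, z2, h2⟩ := ihv
      exact ⟨x1 + x2, y1 + y2, z1 + z2, by rw [h1, h2]; ring⟩
  refine ⟨(q + 2) * a - c, ⟨?_, ?_⟩, ?_, ?_⟩
  · -- g not representable
    simp only [Set.mem_setOf_eq]
    intro hmem
    obtain ⟨x, y, z, hxyz⟩ := decomp _ hmem
    have e : (q + 2) * a - c = (x + y + z) * a + (y + 4 * z) := hxyz.trans (by ring)
    have e' : (q + 2) * a = (x + y + z) * a + (y + 4 * z) + c := by omega
    set k := x + y + z with hkdef
    set m := y + 4 * z with hmdef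
    have hm4k : m ≤ 4 * k := by omega
    -- k < q + 2
    have hk2 : k < q + 2 := by
      by_contra hk
      push_neg at hk
      have : (q + 2) * a ≤ k * a := Nat.mul_le_mul_right a hk
      omega
    -- k ≥ q + 1
    have hk1 : q + 1 ≤ k := by
      by_contra hk
      push_neg at hk
      have t1 : k * (a + 4) ≤ q * (a + 4) := Nat.mul_le_mul_right (a + 4) (by omega)
      have t2 : k * a + 4 * k = k * (a + 4) := by ring
      have t3 : q * (a + 4) = q * a + 4 * q := by ring
      have t4 : (q + 2) * a = q * a + 2 * a := by ring
      have h2a : 2 * a ≤ 4 * q + c := by linarith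
      omega
    have hk : k = q + 1 := by omega
    have e5 : (q + 2) * a = (q + 1) * a + a := by ring
    rw [hk, e5] at e'
    -- now a = m + c with m = y + 4z, y + z ≤ q + 1
    have hma : a = m + c := by omega
    omega
  · -- upper bound
    intro n hn
    simp only [Set.mem_setOf_eq] at hn
    by_contra hgt
    push_neg at hgt
    apply hn
    by_cases hb : (q + 2) * a ≤ n
    · obtain ⟨k, m, hnm, hma⟩ : ∃ k m : ℕ, n = a * k + m ∧ m < a :=
        ⟨n / a, n % a, (Nat.div_add_mod n a).symm, Nat.mod_lt _ (by omega)⟩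
      have hk : q + 2 ≤ k := by
        by_contra hk
        push_neg at hk
        have t1 : a * k ≤ a * (q + 1) := Nat.mul_le_mul_left a (by omega)
        have t2 : a * (q + 1) + a = (q + 2) * a := by ring
        omega
      have hf : m % 4 + m / 4 ≤ q + 2 := by omega
      have hx : (k - m % 4 - m / 4) + (m % 4) + (m / 4) = k := by omega
      have hm4 : m % 4 + 4 * (m / 4) = m := by omega
      have key : (k - m % 4 - m / 4) * a + (m % 4) * (a + 1) + (m / 4) * (a + 4) = n := by
        have expand : (k - m % 4 - m / 4) * a + (m % 4) * (a + 1) + (m / 4) * (a + 4)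
            = ((k - m % 4 - m / 4) + (m % 4) + (m / 4)) * a + (m % 4 + 4 * (m / 4)) := by ring
        rw [expand, hx, hm4, hnm]; ring
      exact key ▸ memc _ _ _
    · push_neg at hb
      obtain ⟨B, hB1, hB2⟩ : ∃ B, (q + 1) * a = B ∧ (q + 2) * a = B + a :=
        ⟨(q + 1) * a, rfl, by ring⟩
      rw [hB2] at hb hgt hgc
      -- bounds on m := n - B
      have hnB : B ≤ n := by omega
      set m := n - B with hmdef
      have hm1 : a < m + c := by omega
      have hm2 : m < a := by omega
      have hr3 : r ≠ 3 := by omega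
      have hy : m = 4 * q + (m - 4 * q) ∧ m - 4 * q ≤ 1 := by omega
      set y := m - 4 * q with hydef
      have hx : (1 - y) + y + q = q + 1 := by omega
      have key : (1 - y) * a + y * (a + 1) + q * (a + 4) = n := by
        have expand : (1 - y) * a + y * (a + 1) + q * (a + 4)
            = ((1 - y) + y + q) * a + (y + 4 * q) := by ring
        rw [expand, hx, hB1]
        omega
      exact key ▸ memc _ _ _
  · intro h3
    have hcr : c = r + 1 := by omega
    have hsub : (((q + 2) * a - c : ℕ) : ℤ) = ((q + 2) : ℤ) * a - c := by
      push_cast [Nat.cast_sub hgc]; ring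
    rw [hsub, hcr]
    have haZ : (a : ℤ) = 4 * (q : ℤ) + r := by exact_mod_cast har
    push_cast
    linear_combination haZ
  · intro h3
    have hcr : c = 1 := by omega
    have hsub : (((q + 2) * a - c : ℕ) : ℤ) = ((q + 2) : ℤ) * a - c := by
      push_cast [Nat.cast_sub hgc]; ring
    rw [hsub, hcr]
    have haZ : (a : ℤ) = 4 * (q : ℤ) + 3 := by
      exact_mod_cast (show a = 4 * q + 3 by omega)
    push_cast
    linear_combination haZ
end
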